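/- arXiv:2101.06473 — 8 statements merged into one kernel-verified Lean document; each statement's English description precedes it below -/
import Mathlib

section
/- Let (Y, 𝒜, ν, S) be an ergodic measure-preserving dynamical system and g ∈ L^∞(Y, ν). Then g is uniform (i.e., the Birkhoff averages (1/k)∑_{i=0}^{k-1} g∘S^i converge to ∫g dν in L^∞ norm) if and only if for every sequence (G_k) of measurable sets of positive measure, (1/k)∑_{i=0}^{k-1} (1/ν(G_k)) ∫_{G_k} g∘S^i dν → ∫ g dν as k → ∞. -/
open MeasureTheory Filter Finset Topology
open scoped ENNReal NNReal

lemma st_avg_eq {Y : Type*} [MeasurableSpace Y] {ν : Measure Y} [IsProbabilityMeasure ν]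
    (g : Y → ℝ) (c : ℝ) (S : Y → Y)
    (hgi : ∀ i : ℕ, Integrable (fun y => g (S^[i] y)) ν)
    {G : Set Y} (hGpos : 0 < ν G) (k : ℕ) :
    (k : ℝ)⁻¹ * ∑ i ∈ range k, (ν G).toReal⁻¹ * ∫ y in G, g (S^[i] y) ∂ν
      = c - (ν G).toReal⁻¹ *
          ∫ y in G, (c - (k : ℝ)⁻¹ * ∑ i ∈ range k, g (S^[i] y)) ∂ν := by
  have hGfin : ν G < ⊤ := measure_lt_top ν G
  have hGt : (ν G).toReal ≠ 0 := (ENNReal.toReal_pos hGpos.ne' hGfin.ne).ne'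
  have hint : IntegrableOn (fun y => (k : ℝ)⁻¹ * ∑ i ∈ range k, g (S^[i] y)) G ν :=
    ((integrable_finset_sum (range k) (fun i _ => hgi i)).const_mul _).integrableOn
  rw [integral_sub (integrableOn_const (C := c) hGfin.ne) hint, setIntegral_const,
    integral_const_mul, integral_finset_sum _ (fun i _ => (hgi i).integrableOn),
    ← Finset.mul_sum]
  simp only [measureReal_def, smul_eq_mul]
  field_simp
  ring


/-- Theorem 1 (characterization of uniform functions via spatial-temporal
differentiations): `g ∈ L^∞` is uniform iff for every sequence of measurable
sets of positive measure the spatial-temporal averages converge to `∫ g`. -/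
theorem uniform_iff_spatial_temporal
    {Y : Type*} [MeasurableSpace Y] (ν : Measure Y) [IsProbabilityMeasure ν]
    (S : Y → Y) (hS : Ergodic S ν) (g : Y → ℝ) (hg : MemLp g ⊤ ν) :
    Tendsto (fun k : ℕ =>
        eLpNorm (fun y => (∫ z, g z ∂ν) - (k : ℝ)⁻¹ * ∑ i ∈ range k, g (S^[i] y)) ⊤ ν)
      atTop (𝓝 0) ↔
    ∀ G : ℕ → Set Y, (∀ k, MeasurableSet (G k)) → (∀ k, 0 < ν (G k)) →
      Tendsto (fun k : ℕ =>
          (k : ℝ)⁻¹ * ∑ i ∈ range k, (ν (G k)).toReal⁻¹ * ∫ y in G k, g (S^[i] y) ∂ν)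
        atTop (𝓝 (∫ z, g z ∂ν)) := by
  classical
  set c : ℝ := ∫ z, g z ∂ν with hc
  set f : ℕ → Y → ℝ := fun k y => c - (k : ℝ)⁻¹ * ∑ i ∈ range k, g (S^[i] y) with hf
  have hgℒ : ∀ i : ℕ, MemLp (fun y => g (S^[i] y)) ⊤ ν := fun i =>
    hg.comp_measurePreserving (hS.toMeasurePreserving.iterate i)
  have hgi : ∀ i : ℕ, Integrable (fun y => g (S^[i] y)) ν := fun i =>
    (hgℒ i).integrable le_top
  have hfℒ : ∀ k, MemLp (f k) ⊤ ν := by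
    intro k
    exact (memLp_const c).sub ((memLp_finset_sum (range k)
      (fun i _ => hgℒ i)).const_mul _)
  have hfi : ∀ k, Integrable (f k) ν := fun k => (hfℒ k).integrable le_top
  constructor
  · intro h G hGm hGpos
    have key : (fun k : ℕ =>
        (k : ℝ)⁻¹ * ∑ i ∈ range k, (ν (G k)).toReal⁻¹ * ∫ y in G k, g (S^[i] y) ∂ν)
        = fun k => c - (ν (G k)).toReal⁻¹ * ∫ y in G k, f k y ∂ν :=
      funext fun k => st_avg_eq g c S hgi (hGpos k) k
    rw [key]
    have hB : Tendsto (fun k => (eLpNorm (f k) ⊤ ν).toReal) atTop (𝓝 0) := by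
      have := (ENNReal.tendsto_toReal (show (0 : ℝ≥0∞) ≠ ⊤ by simp)).comp h
      simpa [hf, Function.comp_def] using this
    have hr : Tendsto (fun k => (ν (G k)).toReal⁻¹ * ∫ y in G k, f k y ∂ν) atTop (𝓝 0) := by
      rw [tendsto_zero_iff_norm_tendsto_zero]
      apply squeeze_zero (fun k => norm_nonneg _) _ hB
      intro k
      have hfin : eLpNorm (f k) ⊤ ν ≠ ⊤ := (hfℒ k).2.ne
      have hbound : ∀ᵐ y ∂(ν.restrict (G k)), ‖f k y‖ ≤ (eLpNorm (f k) ⊤ ν).toReal := by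
        refine ae_restrict_of_ae ?_
        filter_upwards [enorm_ae_le_eLpNormEssSup (f k) ν] with y hy
        rw [eLpNorm_exponent_top]
        calc ‖f k y‖ = ((‖f k y‖₊ : ℝ≥0∞)).toReal := by simp
          _ ≤ _ := ENNReal.toReal_mono (by rwa [eLpNorm_exponent_top] at hfin) hy
      have hI := norm_setIntegral_le_of_norm_le_const_ae (measure_lt_top ν (G k)) hbound
      have htpos : 0 < (ν (G k)).toReal :=
        ENNReal.toReal_pos (hGpos k).ne' (measure_lt_top ν (G k)).ne
      rw [norm_mul, norm_inv, Real.norm_of_nonneg htpos.le]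
      calc (ν (G k)).toReal⁻¹ * ‖∫ y in G k, f k y ∂ν‖
          ≤ (ν (G k)).toReal⁻¹ * ((eLpNorm (f k) ⊤ ν).toReal * (ν (G k)).toReal) := by
            exact mul_le_mul_of_nonneg_left hI (inv_nonneg.2 htpos.le)
        _ = (eLpNorm (f k) ⊤ ν).toReal := by field_simp
    simpa using tendsto_const_nhds.sub hr
  · intro h
    rw [ENNReal.tendsto_nhds_zero]
    intro ε hε
    by_contra hev
    rw [Filter.not_eventually] at hev
    have hev' : ∃ᶠ k in atTop, ε < eLpNorm (f k) ⊤ ν :=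
      hev.mono fun k hk => not_le.mp hk
    set ε' : ℝ≥0∞ := min ε 1 with hε'def
    have hε'pos : 0 < ε' := lt_min hε zero_lt_one
    have hε'ne : ε' ≠ ⊤ := ((min_le_right ε 1).trans_lt ENNReal.one_lt_top).ne
    set δ : ℝ := ε'.toReal with hδdef
    have hδpos : 0 < δ := ENNReal.toReal_pos hε'pos.ne' hε'ne
    obtain ⟨g', hg'm, hgg'⟩ : ∃ g', StronglyMeasurable g' ∧ g =ᵐ[ν] g' :=
      ⟨hg.1.mk g, hg.1.stronglyMeasurable_mk, hg.1.ae_eq_mk⟩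
    have hae : ∀ᵐ y ∂ν, ∀ i : ℕ, g (S^[i] y) = g' (S^[i] y) := by
      rw [ae_all_iff]
      intro i
      exact (hS.toMeasurePreserving.iterate i).quasiMeasurePreserving.ae_eq_comp hgg'
    set f' : ℕ → Y → ℝ :=
      fun k y => c - (k : ℝ)⁻¹ * ∑ i ∈ range k, g' (S^[i] y) with hf'def
    have hf'm : ∀ k, Measurable (f' k) := by
      intro k
      exact measurable_const.sub ((Finset.measurable_sum (range k)
        (fun i _ => hg'm.measurable.comp
          (hS.toMeasurePreserving.iterate i).measurable)).const_mul _)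
    have hff' : ∀ k, f k =ᵐ[ν] f' k := by
      intro k
      filter_upwards [hae] with y hy
      simp only [hf, hf'def]
      rw [Finset.sum_congr rfl fun i _ => hy i]
    have hf'i : ∀ k, Integrable (f' k) ν := fun k => (hfi k).congr (hff' k)
    set A : ℕ → Set Y := fun k => {y | δ / 2 ≤ f' k y} with hAdef
    set B : ℕ → Set Y := fun k => {y | f' k y ≤ -(δ / 2)} with hBdef
    have hAm : ∀ k, MeasurableSet (A k) := fun k =>
      measurableSet_le measurable_const (hf'm k)
    have hBm : ∀ k, MeasurableSet (B k) := fun k =>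
      measurableSet_le (hf'm k) measurable_const
    set G : ℕ → Set Y := fun k =>
      if 0 < ν (A k) then A k else if 0 < ν (B k) then B k else Set.univ with hGdef
    have hGm : ∀ k, MeasurableSet (G k) := by
      intro k
      simp only [hGdef]
      split_ifs
      exacts [hAm k, hBm k, MeasurableSet.univ]
    have hGpos : ∀ k, 0 < ν (G k) := by
      intro k
      simp only [hGdef]
      split_ifs with h1 h2
      exacts [h1, h2, by rw [measure_univ]; exact zero_lt_one]
    have hT := h G hGm hGpos
    have key : (fun k : ℕ =>
        (k : ℝ)⁻¹ * ∑ i ∈ range k, (ν (G k)).toReal⁻¹ * ∫ y in G k, g (S^[i] y) ∂ν)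
        = fun k => c - (ν (G k)).toReal⁻¹ * ∫ y in G k, f k y ∂ν :=
      funext fun k => st_avg_eq g c S hgi (hGpos k) k
    rw [key] at hT
    set r : ℕ → ℝ := fun k => (ν (G k)).toReal⁻¹ * ∫ y in G k, f k y ∂ν with hrdef
    have hr : Tendsto r atTop (𝓝 0) := by
      have := (tendsto_const_nhds (x := c) (f := atTop)).sub hT
      simpa using this
    have hev2 : ∀ᶠ k in atTop, |r k| < δ / 2 := by
      have hball : Metric.ball (0 : ℝ) (δ / 2) ∈ 𝓝 (0 : ℝ) :=
        Metric.ball_mem_nhds _ (by positivity)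
      have h2 : ∀ᶠ k in atTop, r k ∈ Metric.ball (0 : ℝ) (δ / 2) := hr hball
      refine h2.mono fun k hk => ?_
      simpa [Real.dist_eq, Metric.mem_ball] using hk
    have hfreq : ∃ᶠ k in atTop, δ / 2 ≤ |r k| := by
      refine hev'.mono fun k hk => ?_
      have hcongr : eLpNorm (f k) ⊤ ν = eLpNorm (f' k) ⊤ ν :=
        eLpNorm_congr_ae (hff' k)
      have htpos : 0 < (ν (G k)).toReal :=
        ENNReal.toReal_pos (hGpos k).ne' (measure_lt_top ν (G k)).ne
      have hEq : ∫ y in G k, f k y ∂ν = ∫ y in G k, f' k y ∂ν :=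
        integral_congr_ae (ae_restrict_of_ae (hff' k))
      have hnot : ¬ (ν (A k) = 0 ∧ ν (B k) = 0) := by
        rintro ⟨hA0, hB0⟩
        have hbd : ∀ᵐ y ∂ν, ‖f' k y‖ ≤ δ / 2 := by
          filter_upwards [measure_eq_zero_iff_ae_notMem.mp hA0,
            measure_eq_zero_iff_ae_notMem.mp hB0] with y h1 h2
          simp only [hAdef, Set.mem_setOf_eq, not_le] at h1
          simp only [hBdef, Set.mem_setOf_eq, not_le] at h2
          rw [Real.norm_eq_abs, abs_le]
          constructor <;> linarith
        have hle : eLpNorm (f' k) ⊤ ν ≤ ENNReal.ofReal (δ / 2) := by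
          rw [eLpNorm_exponent_top]
          exact eLpNormEssSup_le_of_ae_bound hbd
        have hlt : ENNReal.ofReal (δ / 2) < ε' := by
          rw [← ENNReal.ofReal_toReal hε'ne]
          exact (ENNReal.ofReal_lt_ofReal_iff hδpos).mpr (by linarith)
        have : eLpNorm (f k) ⊤ ν < eLpNorm (f k) ⊤ ν :=
          lt_of_le_of_lt (hcongr ▸ hle)
            (lt_of_lt_of_le (lt_of_lt_of_le hlt (min_le_left ε 1)) hk.le)
        exact absurd this (lt_irrefl _)
      by_cases hA : 0 < ν (A k)
      · have hGk : G k = A k := if_pos hA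
        rw [hGk] at hEq htpos
        have hlow := setIntegral_ge_of_const_le (hAm k) (measure_lt_top ν (A k)).ne
          (fun x hx => hx) (hf'i k).integrableOn
        rw [measureReal_def, smul_eq_mul, mul_comm (ν (A k)).toReal] at hlow
        have hle : δ / 2 ≤ r k := by
          show δ / 2 ≤ (ν (G k)).toReal⁻¹ * ∫ y in G k, f k y ∂ν
          rw [hGk, hEq]
          calc δ / 2 = (ν (A k)).toReal⁻¹ * (δ / 2 * (ν (A k)).toReal) := by
                rw [mul_comm (δ / 2), ← mul_assoc, inv_mul_cancel₀ htpos.ne', one_mul]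
            _ ≤ _ := mul_le_mul_of_nonneg_left hlow (inv_nonneg.2 htpos.le)
        exact hle.trans (le_abs_self _)
      · have hA0 : ν (A k) = 0 := le_zero_iff.mp (not_lt.mp hA)
        have hB : 0 < ν (B k) := by
          rcases eq_or_ne (ν (B k)) 0 with h0 | h0
          · exact absurd ⟨hA0, h0⟩ hnot
          · exact pos_iff_ne_zero.mpr h0
        have hGk : G k = B k := by
          show (if 0 < ν (A k) then A k else if 0 < ν (B k) then B k else Set.univ) = B k
          rw [if_neg hA, if_pos hB]
        rw [hGk] at hEq htpos
        have hlow := setIntegral_ge_of_const_le (hBm k) (measure_lt_top ν (B k)).ne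
          (c := δ / 2) (f := fun y => -(f' k y)) (fun x hx => by
            have hx' : f' k x ≤ -(δ / 2) := hx
            linarith) (hf'i k).neg.integrableOn
        rw [integral_neg, measureReal_def, smul_eq_mul, mul_comm (ν (B k)).toReal] at hlow
        have hle : δ / 2 ≤ -(r k) := by
          show δ / 2 ≤ -((ν (G k)).toReal⁻¹ * ∫ y in G k, f k y ∂ν)
          rw [hGk, hEq, ← mul_neg]
          calc δ / 2 = (ν (B k)).toReal⁻¹ * (δ / 2 * (ν (B k)).toReal) := by
                rw [mul_comm (δ / 2), ← mul_assoc, inv_mul_cancel₀ htpos.ne', one_mul]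
            _ ≤ _ := mul_le_mul_of_nonneg_left hlow (inv_nonneg.2 htpos.le)
        exact hle.trans (neg_le_abs _)
    obtain ⟨k, h1, h2⟩ := (hfreq.and_eventually hev2).exists
    exact absurd h1 (not_le.mpr h2)
end

section
/- Let X be a compact metric space with Borel σ-algebra 𝓑, T : X → X a homeomorphism, and μ a strictly positive T-invariant Borel probability measure. If f ∈ C(X) is nonnegative and real-valued, then Γ(f) = ∫ f dμ_f, where μ_f is an f-maximizing T-invariant measure. -/
open MeasureTheory Filter Finset Topology
open scoped ENNReal NNReal

/-- For a continuous nonnegative function attaining its maximum at `x₀`, the `L^∞` norm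
with respect to an open-positive measure equals the maximum value. -/
lemma eLpNorm_top_of_max {X : Type*} [MetricSpace X] [MeasurableSpace X] [BorelSpace X]
    (μ : Measure X) [μ.IsOpenPosMeasure] {g : X → ℝ} (hg : Continuous g) (hg0 : ∀ x, 0 ≤ g x)
    {x₀ : X} (hx₀ : ∀ y, g y ≤ g x₀) : eLpNorm g ⊤ μ = ENNReal.ofReal (g x₀) := by
  apply le_antisymm
  · have h := eLpNorm_le_of_ae_bound (μ := μ) (p := ⊤) (f := g) (C := g x₀)
      (Eventually.of_forall fun x => by
        rw [Real.norm_eq_abs, abs_of_nonneg (hg0 x)]; exact hx₀ x)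
    simpa using h
  · by_contra h
    push_neg at h
    have hlt : (eLpNorm g ⊤ μ).toReal < g x₀ := ENNReal.toReal_lt_of_lt_ofReal h
    have htop : eLpNorm g ⊤ μ ≠ ⊤ := (h.trans_le le_top).ne
    set r := (eLpNorm g ⊤ μ).toReal with hr
    have hU : IsOpen {x | r < g x} := isOpen_lt continuous_const hg
    have hne : {x | r < g x}.Nonempty := ⟨x₀, hlt⟩
    have hpos := hU.measure_pos μ hne
    have hae : ∀ᵐ x ∂μ, (‖g x‖₊ : ℝ≥0∞) ≤ eLpNorm g ⊤ μ := by
      rw [eLpNorm_exponent_top]; exact ae_le_eLpNormEssSup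
    have h0 : μ {x | r < g x} = 0 := by
      refine measure_mono_null ?_ (ae_iff.mp hae)
      intro x hx
      simp only [Set.mem_setOf_eq, not_le] at hx ⊢
      rw [show ((‖g x‖₊ : ℝ≥0∞)) = ‖g x‖ₑ from rfl, Real.enorm_eq_ofReal (hg0 x)]
      have : r < (ENNReal.ofReal (g x)).toReal := by
        rwa [ENNReal.toReal_ofReal (hg0 x)]
      by_contra hcon
      push_neg at hcon
      exact absurd (ENNReal.toReal_mono htop hcon) (by rw [ENNReal.toReal_ofReal (hg0 x)]; exact not_le.mpr hx)
    exact absurd h0 hpos.ne'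

/-- Krylov–Bogolyubov-type construction: from a sequence of points whose Birkhoff averages of `f`
tend to `Γ`, one can construct a `T`-invariant Borel probability measure `ρ` with `Γ ≤ ∫ f dρ`. -/
lemma exists_invariant_measure_ge {X : Type*} [MetricSpace X] [CompactSpace X]
    [MeasurableSpace X] [BorelSpace X]
    (T : X ≃ₜ X) (f : C(X, ℝ)) (hf0 : ∀ x, 0 ≤ f x) (x_ : ℕ → X) (Γ : ℝ)
    (hs : Tendsto (fun k : ℕ => (k : ℝ)⁻¹ * ∑ i ∈ range k, f ((⇑T)^[i] (x_ k)))
      atTop (𝓝 Γ)) :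
    ∃ ρ : Measure X, IsProbabilityMeasure ρ ∧ MeasurePreserving (⇑T) ρ ρ ∧ Γ ≤ ∫ x, f x ∂ρ := by
  classical
  obtain ⟨𝒰, h𝒰⟩ : ∃ 𝒰 : Ultrafilter ℕ, ↑𝒰 ≤ (atTop : Filter ℕ) :=
    ⟨Ultrafilter.of atTop, Ultrafilter.of_le _⟩
  -- empirical averages
  set m : ℕ → Set X → ℝ :=
    fun k A => (k : ℝ)⁻¹ * ((range k).filter (fun i => (⇑T)^[i] (x_ k) ∈ A)).card with hm
  have hm0 : ∀ k A, 0 ≤ m k A := fun k A => mul_nonneg (by positivity) (Nat.cast_nonneg _)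
  have hm1 : ∀ k A, m k A ≤ 1 := by
    intro k A
    rcases Nat.eq_zero_or_pos k with rfl | hk
    · simp [hm]
    · have h1 : ((((range k).filter (fun i => (⇑T)^[i] (x_ k) ∈ A)).card : ℕ) : ℝ) ≤ k := by
        exact_mod_cast (card_filter_le _ _).trans (card_range k).le
      calc m k A ≤ (k : ℝ)⁻¹ * k := mul_le_mul_of_nonneg_left h1 (by positivity)
        _ = 1 := inv_mul_cancel₀ (Nat.cast_ne_zero.mpr hk.ne')
  -- ultrafilter limits
  have hex : ∀ A : Set X, ∃ L ∈ Set.Icc (0:ℝ) 1, Tendsto (fun k => m k A) ↑𝒰 (𝓝 L) := by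
    intro A
    have h1 : ↑(𝒰.map (fun k => m k A)) ≤ 𝓟 (Set.Icc (0:ℝ) 1) := by
      rw [Ultrafilter.coe_map, Filter.le_principal_iff]
      exact Filter.mem_map.mpr (Filter.Eventually.of_forall fun k => ⟨hm0 k A, hm1 k A⟩)
    obtain ⟨L, hL1, hL2⟩ := isCompact_Icc.ultrafilter_le_nhds _ h1
    refine ⟨L, hL1, ?_⟩
    show Filter.map (fun k => m k A) ↑𝒰 ≤ 𝓝 L
    rwa [← Ultrafilter.coe_map]
  choose ℓ hℓmem hℓ using hex
  have hℓ0 : ∀ A, 0 ≤ ℓ A := fun A => (hℓmem A).1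
  have hℓmono : ∀ {A B : Set X}, A ⊆ B → ℓ A ≤ ℓ B := by
    intro A B hAB
    refine le_of_tendsto_of_tendsto' (hℓ A) (hℓ B) fun k => ?_
    refine mul_le_mul_of_nonneg_left ?_ (by positivity)
    exact_mod_cast card_le_card (monotone_filter_right _ fun i _ hi => hAB hi)
  have hunion_le : ∀ A B : Set X, ℓ (A ∪ B) ≤ ℓ A + ℓ B := by
    intro A B
    refine le_of_tendsto_of_tendsto' (hℓ _) ((hℓ A).add (hℓ B)) fun k => ?_
    show (k : ℝ)⁻¹ * _ ≤ (k : ℝ)⁻¹ * _ + (k : ℝ)⁻¹ * _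
    rw [← mul_add, ← Nat.cast_add]
    refine mul_le_mul_of_nonneg_left (Nat.cast_le.mpr ?_) (by positivity)
    simp only [Set.mem_union, filter_or]
    exact card_union_le _ _
  have hunion_eq : ∀ A B : Set X, Disjoint A B → ℓ (A ∪ B) = ℓ A + ℓ B := by
    intro A B hd
    refine tendsto_nhds_unique (hℓ _) ?_
    have heqk : ∀ k, m k (A ∪ B) = m k A + m k B := by
      intro k
      show (k : ℝ)⁻¹ * _ = (k : ℝ)⁻¹ * _ + (k : ℝ)⁻¹ * _
      rw [← mul_add, ← Nat.cast_add]
      congr 1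
      rw [Nat.cast_inj]
      simp only [Set.mem_union, filter_or]
      refine card_union_of_disjoint (Finset.disjoint_left.mpr ?_)
      intro i hiA hiB
      exact Set.disjoint_left.mp hd (mem_filter.mp hiA).2 (mem_filter.mp hiB).2
    exact ((hℓ A).add (hℓ B)).congr fun k => (heqk k).symm
  have hℓuniv : ℓ Set.univ = 1 := by
    refine tendsto_nhds_unique (hℓ _) ?_
    have hev : ∀ᶠ k in atTop, (1 : ℝ) = m k Set.univ := by
      filter_upwards [eventually_ge_atTop 1] with k hk
      show (1:ℝ) = (k : ℝ)⁻¹ * _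
      simp only [Set.mem_univ, filter_true, card_range]
      exact (inv_mul_cancel₀ (Nat.cast_ne_zero.mpr (by omega : k ≠ 0))).symm
    exact Tendsto.congr' (hev.filter_mono h𝒰) tendsto_const_nhds
  -- shift invariance of ℓ on arbitrary sets of the form needed
  have hshift : ∀ K : Set X, ℓ (⇑T '' K) = ℓ K := by
    intro K
    have hdiff : ∀ k : ℕ, |m k (⇑T '' K) - m k K| ≤ (k : ℝ)⁻¹ := by
      intro k
      rcases Nat.eq_zero_or_pos k with rfl | hk
      · simp [hm]
      have h1 : ((range k).filter (fun i => (⇑T)^[i] (x_ k) ∈ K)).card ≤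
          ((range k).filter (fun i => (⇑T)^[i] (x_ k) ∈ ⇑T '' K)).card + 1 := by
        set A := (range k).filter (fun i => (⇑T)^[i] (x_ k) ∈ K) with hA
        set B := (range k).filter (fun i => (⇑T)^[i] (x_ k) ∈ ⇑T '' K) with hB
        have hsub : A ⊆ insert (k-1) (A.erase (k-1)) := subset_insert_iff.mpr (Finset.Subset.refl _)
        have hmapped : ∀ i ∈ A.erase (k-1), i + 1 ∈ B := by
          intro i hi
          obtain ⟨hne, hiA⟩ := mem_erase.mp hi
          obtain ⟨hir, hiK⟩ := mem_filter.mp hiA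
          refine mem_filter.mpr ⟨mem_range.mpr ?_, ?_⟩
          · have := mem_range.mp hir; omega
          · rw [Function.iterate_succ_apply']
            exact ⟨_, hiK, rfl⟩
        calc A.card ≤ (insert (k-1) (A.erase (k-1))).card := card_le_card hsub
          _ ≤ (A.erase (k-1)).card + 1 := card_insert_le _ _
          _ ≤ B.card + 1 := by
            have := card_le_card_of_injOn (· + 1) hmapped (fun a _ b _ h => by
              simpa using h)
            omega
      have h2 : ((range k).filter (fun i => (⇑T)^[i] (x_ k) ∈ ⇑T '' K)).card ≤
          ((range k).filter (fun i => (⇑T)^[i] (x_ k) ∈ K)).card + 1 := by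
        set A := (range k).filter (fun i => (⇑T)^[i] (x_ k) ∈ K) with hA
        set B := (range k).filter (fun i => (⇑T)^[i] (x_ k) ∈ ⇑T '' K) with hB
        have hsub : B ⊆ insert 0 (B.erase 0) := subset_insert_iff.mpr (Finset.Subset.refl _)
        have hmapped : ∀ i ∈ B.erase 0, i - 1 ∈ A := by
          intro i hi
          obtain ⟨hne, hiB⟩ := mem_erase.mp hi
          obtain ⟨hir, hiK⟩ := mem_filter.mp hiB
          obtain ⟨y, hyK, hy⟩ := hiK
          refine mem_filter.mpr ⟨mem_range.mpr ?_, ?_⟩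
          · have := mem_range.mp hir; omega
          · have hisucc : i = (i - 1) + 1 := by omega
            rw [hisucc, Function.iterate_succ_apply'] at hy
            have hyeq : y = (⇑T)^[i-1] (x_ k) := T.injective hy
            rwa [hyeq] at hyK
        calc B.card ≤ (insert 0 (B.erase 0)).card := card_le_card hsub
          _ ≤ (B.erase 0).card + 1 := card_insert_le _ _
          _ ≤ A.card + 1 := by
            have := card_le_card_of_injOn (· - 1) hmapped (fun a ha b hb h => by
              have ha0 := (mem_erase.mp ha).1
              have hb0 := (mem_erase.mp hb).1
              dsimp only at h
              omega)
            omega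
      have habs : |((((range k).filter (fun i => (⇑T)^[i] (x_ k) ∈ ⇑T '' K)).card : ℝ)) -
          (((range k).filter (fun i => (⇑T)^[i] (x_ k) ∈ K)).card : ℝ)| ≤ 1 := by
        rw [abs_le]
        constructor
        · have : (((range k).filter (fun i => (⇑T)^[i] (x_ k) ∈ K)).card : ℝ) ≤
              (((range k).filter (fun i => (⇑T)^[i] (x_ k) ∈ ⇑T '' K)).card : ℝ) + 1 := by
            exact_mod_cast h1
          linarith
        · have : (((range k).filter (fun i => (⇑T)^[i] (x_ k) ∈ ⇑T '' K)).card : ℝ) ≤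
              (((range k).filter (fun i => (⇑T)^[i] (x_ k) ∈ K)).card : ℝ) + 1 := by
            exact_mod_cast h2
          linarith
      calc |m k (⇑T '' K) - m k K| = (k : ℝ)⁻¹ *
            |((((range k).filter (fun i => (⇑T)^[i] (x_ k) ∈ ⇑T '' K)).card : ℝ)) -
              (((range k).filter (fun i => (⇑T)^[i] (x_ k) ∈ K)).card : ℝ)| := by
              show |(k : ℝ)⁻¹ * _ - (k : ℝ)⁻¹ * _| = _
              rw [← mul_sub, abs_mul, abs_of_nonneg (by positivity : (0:ℝ) ≤ (k:ℝ)⁻¹)]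
        _ ≤ (k : ℝ)⁻¹ * 1 := mul_le_mul_of_nonneg_left habs (by positivity)
        _ = (k : ℝ)⁻¹ := mul_one _
    have h0 : Tendsto (fun k => m k (⇑T '' K) - m k K) atTop (𝓝 0) :=
      squeeze_zero_norm (fun k => by simpa [Real.norm_eq_abs] using hdiff k)
        tendsto_inv_atTop_nhds_zero_nat
    have h1 : Tendsto (fun k => m k (⇑T '' K) - m k K) ↑𝒰 (𝓝 (ℓ (⇑T '' K) - ℓ K)) :=
      (hℓ _).sub (hℓ _)
    have := tendsto_nhds_unique h1 (h0.mono_left h𝒰)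
    linarith [this]
  -- the content and its measure
  set Λ : MeasureTheory.Content X :=
    { toFun := fun K => Real.toNNReal (ℓ ↑K)
      mono' := fun K₁ K₂ h => Real.toNNReal_mono (hℓmono h)
      sup_disjoint' := by
        intro K₁ K₂ hd _ _
        simp only [TopologicalSpace.Compacts.coe_sup]
        rw [hunion_eq _ _ hd, Real.toNNReal_add (hℓ0 _) (hℓ0 _)]
      sup_le' := by
        intro K₁ K₂
        simp only [TopologicalSpace.Compacts.coe_sup]
        rw [← Real.toNNReal_add (hℓ0 _) (hℓ0 _)]
        exact Real.toNNReal_mono (hunion_le _ _) } with hΛ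
  set ρ : Measure X := Λ.measure with hρ
  have hΛle1 : ∀ K : TopologicalSpace.Compacts X, (Λ K : ℝ≥0∞) ≤ 1 := by
    intro K
    show ((Real.toNNReal (ℓ ↑K) : ℝ≥0) : ℝ≥0∞) ≤ 1
    rw [← ENNReal.coe_one, ENNReal.coe_le_coe, ← Real.toNNReal_one]
    exact Real.toNNReal_mono (hℓmem _).2
  have hρuniv : ρ Set.univ = 1 := by
    rw [hρ, Λ.measure_apply MeasurableSet.univ, Λ.outerMeasure_of_isOpen _ isOpen_univ]
    apply le_antisymm
    · exact iSup_le fun K => iSup_le fun _ => hΛle1 K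
    · have h := Λ.le_innerContent ⟨Set.univ, isCompact_univ⟩ ⟨Set.univ, isOpen_univ⟩
        subset_rfl
      refine le_trans (le_of_eq ?_) h
      show (1 : ℝ≥0∞) = ((Real.toNNReal (ℓ Set.univ) : ℝ≥0) : ℝ≥0∞)
      rw [hℓuniv, Real.toNNReal_one, ENNReal.coe_one]
  haveI hρprob : IsProbabilityMeasure ρ := ⟨hρuniv⟩
  have hTmeas : Measurable ⇑T := T.continuous.measurable
  have hKmap : ∀ ⦃K : TopologicalSpace.Compacts X⦄,
      ((Λ.toFun (K.map ⇑T T.continuous) : ℝ≥0) : ℝ≥0∞) = ((Λ.toFun K : ℝ≥0) : ℝ≥0∞) := by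
    intro K
    show ((Real.toNNReal (ℓ ↑(K.map ⇑T T.continuous)) : ℝ≥0) : ℝ≥0∞) = _
    rw [TopologicalSpace.Compacts.coe_map, hshift]
  have hpres : MeasurePreserving ⇑T ρ ρ := by
    refine ⟨hTmeas, Measure.ext fun A hA => ?_⟩
    rw [Measure.map_apply hTmeas hA, hρ, Λ.measure_apply (hTmeas hA), Λ.measure_apply hA,
      Λ.outerMeasure_preimage T hKmap]
  refine ⟨ρ, hρprob, hpres, ?_⟩
  -- integral lower bound
  have hfint : ∀ g : X → ℝ, Continuous g → Integrable g ρ := by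
    intro g hg
    have := hg.continuousOn.integrableOn_compact (μ := ρ) isCompact_univ
    rwa [integrableOn_univ] at this
  set M : ℝ := ‖f‖ with hMdef
  have hfM : ∀ x, f x ≤ M := fun x =>
    (le_abs_self _).trans (by rw [← Real.norm_eq_abs]; exact f.norm_coe_le_norm x)
  have hM0 : 0 ≤ M := norm_nonneg f
  rcases eq_or_lt_of_le hM0 with hM0' | hMpos
  · -- degenerate case f ≡ 0
    have hf_zero : ∀ x, f x = 0 := fun x => le_antisymm (hM0' ▸ hfM x) (hf0 x)
    have hΓ0 : Γ = 0 :=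
      tendsto_nhds_unique (hs.congr fun k => by simp [hf_zero]) tendsto_const_nhds
    rw [hΓ0]
    exact integral_nonneg fun x => hf0 x
  have key : ∀ n : ℕ, 0 < n → Γ - M / n ≤ ∫ x, f x ∂ρ := by
    intro n hn
    have hn0 : (0:ℝ) < n := by exact_mod_cast hn
    have hMn : 0 < M / n := div_pos hMpos hn0
    set Kc : ℕ → Set X := fun j => {x | (j : ℝ) * (M / n) ≤ f x} with hKc
    have hKcl : ∀ j, IsClosed (Kc j) := fun j => isClosed_le continuous_const f.continuous
    have hKcompact : ∀ j, IsCompact (Kc j) := fun j => (hKcl j).isCompact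
    have hcard : ∀ y : X, (((Icc 1 n).filter (fun j => y ∈ Kc j)).card : ℝ) = ⌊f y / (M/n)⌋₊ := by
      intro y
      have ht0 : 0 ≤ f y / (M/n) := div_nonneg (hf0 y) hMn.le
      have hfloor_le : ⌊f y / (M/n)⌋₊ ≤ n := by
        have hle : f y / (M/n) ≤ (n:ℝ) := by
          rw [div_le_iff₀ hMn]
          calc f y ≤ M := hfM y
            _ = (n:ℝ) * (M/n) := by field_simp
        calc ⌊f y / (M/n)⌋₊ ≤ ⌊(n:ℝ)⌋₊ := Nat.floor_mono hle
          _ = n := Nat.floor_natCast n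
      have hset : (Icc 1 n).filter (fun j => y ∈ Kc j) = Icc 1 ⌊f y / (M/n)⌋₊ := by
        ext j
        simp only [mem_filter, mem_Icc, hKc, Set.mem_setOf_eq]
        constructor
        · rintro ⟨⟨hj1, hj2⟩, hj3⟩
          refine ⟨hj1, Nat.le_floor ?_⟩
          rwa [le_div_iff₀ hMn]
        · rintro ⟨hj1, hj2⟩
          have hj : (j:ℝ) ≤ f y / (M/n) := (Nat.le_floor_iff ht0).mp hj2
          exact ⟨⟨hj1, le_trans hj2 hfloor_le⟩, by rwa [← le_div_iff₀ hMn]⟩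
      rw [hset, Nat.card_Icc]
      simp
    have hpoint_ge : ∀ y : X,
        f y - M/n ≤ (M/n) * (((Icc 1 n).filter (fun j => y ∈ Kc j)).card : ℝ) := by
      intro y
      rw [hcard y]
      have h2 : f y / (M/n) - 1 ≤ (⌊f y / (M/n)⌋₊ : ℝ) := (Nat.sub_one_lt_floor _).le
      calc f y - M/n = (M/n) * (f y / (M/n) - 1) := by field_simp
        _ ≤ (M/n) * (⌊f y / (M/n)⌋₊ : ℝ) := mul_le_mul_of_nonneg_left h2 hMn.le
    have hpoint_le : ∀ y : X,
        (M/n) * (((Icc 1 n).filter (fun j => y ∈ Kc j)).card : ℝ) ≤ f y := by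
      intro y
      rw [hcard y]
      have h1 : (⌊f y / (M/n)⌋₊ : ℝ) ≤ f y / (M/n) := Nat.floor_le (div_nonneg (hf0 y) hMn.le)
      calc (M/n) * (⌊f y / (M/n)⌋₊ : ℝ) ≤ (M/n) * (f y / (M/n)) :=
            mul_le_mul_of_nonneg_left h1 hMn.le
        _ = f y := by field_simp
    have hmeas : ∀ j, MeasurableSet (Kc j) := fun j => (hKcl j).measurableSet
    have hindint : ∀ j, Integrable ((Kc j).indicator (fun _ => (1:ℝ))) ρ := fun j =>
      (integrable_indicator_iff (hmeas j)).mpr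
        ((integrableOn_const_iff (C := (1:ℝ))).mpr (Or.inr (measure_lt_top ρ _)))
    have hcardsum : ∀ x : X, (((Icc 1 n).filter (fun j => x ∈ Kc j)).card : ℝ) =
        ∑ j ∈ Icc 1 n, (Kc j).indicator (fun _ => (1:ℝ)) x := by
      intro x
      rw [card_filter]
      push_cast
      exact Finset.sum_congr rfl fun j _ => by simp [Set.indicator_apply]
    have hgle : ∀ x, (M/n) * ∑ j ∈ Icc 1 n, (Kc j).indicator (fun _ => (1:ℝ)) x ≤ f x := by
      intro x
      rw [← hcardsum x]
      exact hpoint_le x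
    have hintg : ∫ x, (M/n) * ∑ j ∈ Icc 1 n, (Kc j).indicator (fun _ => (1:ℝ)) x ∂ρ
        = (M/n) * ∑ j ∈ Icc 1 n, (ρ (Kc j)).toReal := by
      rw [integral_const_mul, integral_finset_sum _ (fun j _ => hindint j)]
      congr 1
      refine Finset.sum_congr rfl fun j _ => ?_
      rw [integral_indicator_const (1:ℝ) (hmeas j)]
      simp [measureReal_def]
    have hIge : (M/n) * ∑ j ∈ Icc 1 n, (ρ (Kc j)).toReal ≤ ∫ x, f x ∂ρ := by
      rw [← hintg]
      refine integral_mono ?_ (hfint f f.continuous) hgle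
      exact (integrable_finset_sum _ (fun j _ => hindint j)).const_mul _
    have hρK : ∀ j, ℓ (Kc j) ≤ (ρ (Kc j)).toReal := by
      intro j
      have h1 : ((Real.toNNReal (ℓ (Kc j)) : ℝ≥0) : ℝ≥0∞) ≤ ρ (Kc j) := by
        rw [hρ, Λ.measure_apply (hmeas j)]
        exact Λ.le_outerMeasure_compacts ⟨Kc j, hKcompact j⟩
      have h2 := ENNReal.toReal_mono (measure_ne_top ρ _) h1
      rwa [ENNReal.coe_toReal, Real.coe_toNNReal _ (hℓ0 _)] at h2
    have hlim : Γ - M/n ≤ (M/n) * ∑ j ∈ Icc 1 n, ℓ (Kc j) := by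
      have ha : Tendsto (fun k => (M/n) * ∑ j ∈ Icc 1 n, m k (Kc j)) ↑𝒰
          (𝓝 ((M/n) * ∑ j ∈ Icc 1 n, ℓ (Kc j))) :=
        (tendsto_finset_sum _ (fun j _ => hℓ (Kc j))).const_mul (M/n)
      have hb : Tendsto (fun k : ℕ => ((k:ℝ)⁻¹ * ∑ i ∈ range k, f ((⇑T)^[i] (x_ k))) - M/n) ↑𝒰
          (𝓝 (Γ - M/n)) := (hs.mono_left h𝒰).sub_const _
      refine le_of_tendsto_of_tendsto hb ha ?_
      have hev : ∀ᶠ k : ℕ in atTop,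
          ((k:ℝ)⁻¹ * ∑ i ∈ range k, f ((⇑T)^[i] (x_ k))) - M/n ≤
            (M/n) * ∑ j ∈ Icc 1 n, m k (Kc j) := by
        filter_upwards [eventually_ge_atTop 1] with k hk
        have hk0 : ((k:ℕ) : ℝ) ≠ 0 := Nat.cast_ne_zero.mpr (by omega)
        have hswap : ∑ j ∈ Icc 1 n,
            (((range k).filter (fun i => (⇑T)^[i] (x_ k) ∈ Kc j)).card : ℝ)
            = ∑ i ∈ range k, (((Icc 1 n).filter (fun j => (⇑T)^[i] (x_ k) ∈ Kc j)).card : ℝ) := by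
          push_cast [card_filter]
          exact Finset.sum_comm
        have hstep : ∀ i ∈ range k, f ((⇑T)^[i] (x_ k)) - M/n ≤
            (M/n) * (((Icc 1 n).filter (fun j => (⇑T)^[i] (x_ k) ∈ Kc j)).card : ℝ) :=
          fun i _ => hpoint_ge _
        have hsum := Finset.sum_le_sum hstep
        rw [Finset.sum_sub_distrib, Finset.sum_const, card_range, nsmul_eq_mul,
          ← Finset.mul_sum, ← hswap] at hsum
        calc (k:ℝ)⁻¹ * ∑ i ∈ range k, f ((⇑T)^[i] (x_ k)) - M/n
            = (k:ℝ)⁻¹ * ((∑ i ∈ range k, f ((⇑T)^[i] (x_ k))) - (k:ℝ) * (M/n)) := by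
              rw [mul_sub, ← mul_assoc, inv_mul_cancel₀ hk0, one_mul]
          _ ≤ (k:ℝ)⁻¹ * ((M/n) * ∑ j ∈ Icc 1 n,
                (((range k).filter (fun i => (⇑T)^[i] (x_ k) ∈ Kc j)).card : ℝ)) :=
              mul_le_mul_of_nonneg_left hsum (by positivity)
          _ = (M/n) * ∑ j ∈ Icc 1 n, m k (Kc j) := by
              show _ = (M/n) * ∑ j ∈ Icc 1 n, ((k:ℝ)⁻¹ * _)
              rw [← Finset.mul_sum]
              ring
      exact hev.filter_mono h𝒰
    refine le_trans hlim (le_trans ?_ hIge)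
    exact mul_le_mul_of_nonneg_left (Finset.sum_le_sum fun j _ => hρK j) hMn.le
  have hten : Tendsto (fun n : ℕ => Γ - M / n) atTop (𝓝 Γ) := by
    have h := tendsto_const_div_atTop_nhds_zero_nat M
    simpa using tendsto_const_nhds.sub h
  exact le_of_tendsto hten (by filter_upwards [eventually_gt_atTop 0] with n hn using key n hn)

/-- Lemma (gauge equals maximizing integral): for a strictly positive invariant
Borel probability measure `μ` on a compact metric space and a nonnegative
continuous `f`, the gauge `Γ(f)` equals `∫ f dν` for any `f`-maximizing
`T`-invariant Borel probability measure `ν`. -/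
theorem gauge_eq_maximizing_integral
    {X : Type*} [MetricSpace X] [CompactSpace X] [MeasurableSpace X] [BorelSpace X]
    (μ : Measure X) [IsProbabilityMeasure μ] [μ.IsOpenPosMeasure]
    (T : X ≃ₜ X) (hT : MeasurePreserving (⇑T) μ μ)
    (f : C(X, ℝ)) (hf0 : ∀ x, 0 ≤ f x)
    (ν : Measure X) [IsProbabilityMeasure ν] (hν : MeasurePreserving (⇑T) ν ν)
    (hmax : ∀ ν' : Measure X, IsProbabilityMeasure ν' → MeasurePreserving (⇑T) ν' ν' →
      ∫ x, f x ∂ν' ≤ ∫ x, f x ∂ν)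
    (Γ : ℝ)
    (hΓ : Tendsto (fun k : ℕ =>
        (eLpNorm (fun x => (k : ℝ)⁻¹ * ∑ i ∈ range k, f ((⇑T)^[i] x)) ⊤ μ).toReal)
      atTop (𝓝 Γ)) :
    Γ = ∫ x, f x ∂ν := by
  classical
  have hXne : Nonempty X := μ.nonempty_of_neZero
  set F : ℕ → X → ℝ := fun k x => (k : ℝ)⁻¹ * ∑ i ∈ range k, f ((⇑T)^[i] x) with hF
  have hFc : ∀ k, Continuous (F k) := fun k =>
    continuous_const.mul (continuous_finset_sum _ fun i _ => f.continuous.comp (T.continuous.iterate i))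
  have hF0 : ∀ k x, 0 ≤ F k x := fun k x =>
    mul_nonneg (by positivity) (Finset.sum_nonneg fun i _ => hf0 _)
  have hmax' : ∀ k : ℕ, ∃ x : X, ∀ y, F k y ≤ F k x := by
    intro k
    obtain ⟨x, -, hx⟩ := isCompact_univ.exists_isMaxOn Set.univ_nonempty (hFc k).continuousOn
    exact ⟨x, fun y => hx (Set.mem_univ y)⟩
  choose x_ hx_ using hmax'
  set s : ℕ → ℝ := fun k => F k (x_ k) with hsdef
  have heq : ∀ k, (eLpNorm (F k) ⊤ μ).toReal = s k := by
    intro k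
    rw [eLpNorm_top_of_max μ (hFc k) (hF0 k) (hx_ k), ENNReal.toReal_ofReal (hF0 _ _)]
  have hs : Tendsto s atTop (𝓝 Γ) := hΓ.congr heq
  -- upper bound : Γ ≤ ∫ f dν
  obtain ⟨ρ, hρ1, hρ2, hρ3⟩ := exists_invariant_measure_ge T f hf0 x_ Γ hs
  have upper : Γ ≤ ∫ x, f x ∂ν := hρ3.trans (hmax ρ hρ1 hρ2)
  -- lower bound : ∫ f dν ≤ Γ
  have hfint : ∀ (ρ : Measure X) [IsFiniteMeasure ρ] (g : X → ℝ), Continuous g → Integrable g ρ := by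
    intro ρ _ g hg
    have := hg.continuousOn.integrableOn_compact (μ := ρ) isCompact_univ
    rwa [integrableOn_univ] at this
  have hint : ∀ i : ℕ, ∫ x, f ((⇑T)^[i] x) ∂ν = ∫ x, f x ∂ν := by
    intro i
    induction i with
    | zero => simp
    | succ i ih =>
      rw [← ih, ← hν.integral_comp T.measurableEmbedding (fun y => f ((⇑T)^[i] y))]
      exact integral_congr_ae (Eventually.of_forall fun x => by
        simp only [Function.iterate_succ_apply])
  have lower : ∫ x, f x ∂ν ≤ Γ := by
    refine ge_of_tendsto hs ?_
    filter_upwards [eventually_ge_atTop 1] with k hk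
    have hFν : ∫ x, F k x ∂ν = ∫ x, f x ∂ν := by
      have h1 : ∫ x, F k x ∂ν = (k : ℝ)⁻¹ * ∫ x, ∑ i ∈ range k, f ((⇑T)^[i] x) ∂ν :=
        integral_const_mul _ _
      rw [h1, integral_finset_sum (range k) (f := fun i x => f ((⇑T)^[i] x))
        (fun i _ => hfint ν (fun x => f ((⇑T)^[i] x)) (f.continuous.comp (T.continuous.iterate i)))]
      have h2 : ∀ i ∈ range k, ∫ x, f ((⇑T)^[i] x) ∂ν = ∫ x, f x ∂ν := fun i _ => hint i
      rw [Finset.sum_congr rfl h2, Finset.sum_const, card_range, nsmul_eq_mul, ← mul_assoc,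
        inv_mul_cancel₀ (Nat.cast_ne_zero.mpr (by omega : k ≠ 0)), one_mul]
    calc ∫ x, f x ∂ν = ∫ x, F k x ∂ν := hFν.symm
      _ ≤ ∫ _, s k ∂ν := integral_mono (hfint ν _ (hFc k)) (integrable_const _) fun y => hx_ k y
      _ = s k := by simp
  exact le_antisymm upper lower
end

section
/- Let X be a compact metric space, T : X → X a homeomorphism, and μ a strictly positive T-invariant ergodic Borel probability measure. If for every sequence (U_k) of open sets of positive measure and every f ∈ C(X) the averages (1/μ(U_k)) ∫_{U_k} (1/k)∑_{i=0}^{k-1} f∘T^i dμ converge to ∫ f dμ, then (X, T) is uniquely ergodic. -/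
open MeasureTheory Filter Finset Topology
open scoped NNReal ENNReal

/-- (3) ⇒ (1) of Theorem: if `μ` is strictly positive and all spatial-temporal
differentiations of continuous functions along open sets of positive measure
converge to the space average, then `(X, T)` is uniquely ergodic. -/
theorem uniquelyErgodic_of_spatial_temporal_open
    {X : Type*} [MetricSpace X] [CompactSpace X] [MeasurableSpace X] [BorelSpace X]
    (μ : Measure X) [IsProbabilityMeasure μ] [μ.IsOpenPosMeasure]
    (T : X ≃ₜ X) (hErg : Ergodic (⇑T) μ)
    (hconv : ∀ U : ℕ → Set X, (∀ k, IsOpen (U k)) → (∀ k, 0 < μ (U k)) →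
      ∀ f : C(X, ℝ),
        Tendsto (fun k : ℕ => (μ (U k)).toReal⁻¹ *
            ∫ x in U k, (k : ℝ)⁻¹ * ∑ i ∈ range k, f ((⇑T)^[i] x) ∂μ)
          atTop (𝓝 (∫ x, f x ∂μ))) :
    ∀ ν : Measure X, IsProbabilityMeasure ν → MeasurePreserving (⇑T) ν ν → ν = μ := by
  intro ν hνP hνT
  by_contra hne
  -- find a continuous function with differing integrals
  obtain ⟨g, hg⟩ : ∃ g : C(X, ℝ), ∫ x, g x ∂ν ≠ ∫ x, g x ∂μ := by
    by_contra h
    push_neg at h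
    apply hne
    refine ext_of_forall_lintegral_eq_of_IsFiniteMeasure (fun f => ?_)
    have hcont : Continuous fun x => ((f x : ℝ)) :=
      NNReal.continuous_coe.comp f.continuous
    have hint : ∀ (m : Measure X) [IsFiniteMeasure m],
        Integrable (fun x => ((f x : ℝ))) m := by
      intro m _
      exact Continuous.integrable_of_hasCompactSupport hcont
        ((isClosed_tsupport _).isCompact)
    have key := h ⟨fun x => ((f x : ℝ)), hcont⟩
    simp only [ContinuousMap.coe_mk] at key
    rw [lintegral_coe_eq_integral (fun x => f x) (hint ν),
      lintegral_coe_eq_integral (fun x => f x) (hint μ), key]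
  -- WLOG the ν-integral is larger
  obtain ⟨f, hf⟩ : ∃ f : C(X, ℝ), ∫ x, f x ∂μ < ∫ x, f x ∂ν := by
    rcases lt_or_gt_of_ne hg with h | h
    · refine ⟨-g, ?_⟩
      simp only [ContinuousMap.neg_apply, integral_neg]
      linarith
    · exact ⟨g, h⟩
  set a : ℝ := ∫ x, f x ∂μ with ha
  set c : ℝ := ∫ x, f x ∂ν with hc
  set ε : ℝ := (c - a) / 2 with hε
  have hε0 : 0 < ε := by simp [hε]; linarith
  have hacε : a + ε < c := by rw [hε]; linarith
  -- the Birkhoff averages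
  set A : ℕ → X → ℝ := fun k x => (k : ℝ)⁻¹ * ∑ i ∈ range k, f ((⇑T)^[i] x) with hA
  have hAcont : ∀ k, Continuous (A k) := by
    intro k
    exact continuous_const.mul (continuous_finset_sum _ fun i _ =>
      f.continuous.comp (T.continuous.iterate i))
  -- the ν-integral of each average is c
  have hiter : ∀ i : ℕ, ∫ x, f ((⇑T)^[i] x) ∂ν = c := by
    intro i
    induction i with
    | zero => simp [hc]
    | succ n ih =>
      simp_rw [Function.iterate_succ_apply]
      exact (hνT.integral_comp T.measurableEmbedding
        (fun y => f ((⇑T)^[n] y))).trans ih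
  have hAint : ∀ k : ℕ, 1 ≤ k → ∫ x, A k x ∂ν = c := by
    intro k hk
    have hint : ∀ i : ℕ, Integrable (fun x => f ((⇑T)^[i] x)) ν := fun i =>
      Continuous.integrable_of_hasCompactSupport
        (f.continuous.comp (T.continuous.iterate i)) ((isClosed_tsupport _).isCompact)
    rw [hA]
    simp only
    rw [integral_const_mul, integral_finset_sum _ fun i _ => hint i]
    simp_rw [hiter]
    rw [Finset.sum_const, card_range, nsmul_eq_mul]
    have hk0 : (k : ℝ) ≠ 0 := Nat.cast_ne_zero.mpr (by omega)
    field_simp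
  -- the open sets
  set U : ℕ → Set X := fun k => if k = 0 then Set.univ else {x | a + ε < A k x} with hU
  have hUopen : ∀ k, IsOpen (U k) := by
    intro k
    by_cases hk : k = 0
    · simp [hU, hk]
    · simp only [hU, hk, if_false]
      exact isOpen_lt continuous_const (hAcont k)
  have hXne : Nonempty X := by
    by_contra hX
    rw [not_nonempty_iff] at hX
    have h1 := measure_univ (μ := μ)
    rw [Set.univ_eq_empty_iff.mpr hX, measure_empty] at h1
    simp at h1
  have hUne : ∀ k, (U k).Nonempty := by
    intro k
    by_cases hk : k = 0
    · simp [hU, hk]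
    · simp only [hU, hk, if_false]
      by_contra hemp
      rw [Set.not_nonempty_iff_eq_empty, Set.eq_empty_iff_forall_notMem] at hemp
      have hle : ∀ x, A k x ≤ a + ε := fun x => le_of_not_gt (hemp x)
      have : ∫ x, A k x ∂ν ≤ ∫ _x, (a + ε) ∂ν := by
        refine integral_mono (Continuous.integrable_of_hasCompactSupport (hAcont k)
          ((isClosed_tsupport _).isCompact)) (integrable_const _) hle
      rw [hAint k (by omega), integral_const] at this
      simp at this
      linarith
  have hUpos : ∀ k, 0 < μ (U k) :=
    fun k => (hUopen k).measure_pos μ (hUne k)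
  have htend := hconv U hUopen hUpos f
  rw [← ha] at htend
  -- eventually the averages are < a + ε
  have hlt := (tendsto_order.1 htend).2 (a + ε) (by linarith)
  -- but for k ≥ 1 they are ≥ a + ε
  have hge : ∀ k : ℕ, 1 ≤ k → a + ε ≤ (μ (U k)).toReal⁻¹ *
      ∫ x in U k, (k : ℝ)⁻¹ * ∑ i ∈ range k, f ((⇑T)^[i] x) ∂μ := by
    intro k hk
    have hUk : U k = {x | a + ε < A k x} := by
      simp only [hU]; rw [if_neg (Nat.one_le_iff_ne_zero.mp hk)]
    have hμUfin : μ (U k) ≠ ⊤ := measure_ne_top μ _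
    have hμUpos : 0 < (μ (U k)).toReal :=
      ENNReal.toReal_pos (hUpos k).ne' hμUfin
    have hlb : (a + ε) * (μ (U k)).toReal ≤ ∫ x in U k, A k x ∂μ := by
      rw [mul_comm, ← smul_eq_mul, ← measureReal_def]
      refine setIntegral_ge_of_const_le (hUopen k).measurableSet hμUfin
        (fun x hx => ?_) ((Continuous.integrable_of_hasCompactSupport (hAcont k)
          ((isClosed_tsupport _).isCompact)).integrableOn)
      rw [hUk] at hx
      exact le_of_lt hx
    have : (a + ε) = (μ (U k)).toReal⁻¹ * ((a + ε) * (μ (U k)).toReal) := by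
      field_simp
    rw [this]
    exact mul_le_mul_of_nonneg_left hlb (by positivity)
  rw [eventually_atTop] at hlt
  obtain ⟨N, hN⟩ := hlt
  have h1 := hN (max N 1) (le_max_left _ _)
  have h2 := hge (max N 1) (le_max_right _ _)
  linarith
end

section
/- Let X be a compact connected metric space, T : X → X a homeomorphism, and μ a strictly positive T-invariant ergodic Borel probability measure such that (X, T) is not uniquely ergodic. Then there exists a sequence (U_k) of nonempty open subsets of X of positive measure and a nonnegative f ∈ C(X) such that the sequence ((1/μ(U_k)) ∫_{U_k} (1/k)∑_{i=0}^{k-1} f∘T^i dμ)_k is not Cauchy. -/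
open MeasureTheory Filter Finset Topology
open scoped NNReal ENNReal

/-- Pathological differentiation on a connected space: if `μ` is strictly
positive but `(X, T)` is not uniquely ergodic, there exist nonempty open sets
`U_k` of positive measure and a nonnegative continuous `f` whose
spatial-temporal differentiation sequence is not Cauchy. -/
theorem pathological_connected_differentiation
    {X : Type*} [MetricSpace X] [CompactSpace X] [ConnectedSpace X]
    [MeasurableSpace X] [BorelSpace X]
    (μ : Measure X) [IsProbabilityMeasure μ] [μ.IsOpenPosMeasure]
    (T : X ≃ₜ X) (hErg : Ergodic (⇑T) μ)
    (hNUE : ¬ ∀ ν : Measure X, IsProbabilityMeasure ν → MeasurePreserving (⇑T) ν ν → ν = μ) :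
    ∃ (U : ℕ → Set X) (f : C(X, ℝ)),
      (∀ k, IsOpen (U k)) ∧ (∀ k, (U k).Nonempty) ∧ (∀ k, 0 < μ (U k)) ∧
      (∀ x, 0 ≤ f x) ∧
      ¬ CauchySeq (fun k : ℕ => (μ (U k)).toReal⁻¹ *
          ∫ x in U k, (k : ℝ)⁻¹ * ∑ i ∈ range k, f ((⇑T)^[i] x) ∂μ) := by
  push_neg at hNUE
  obtain ⟨ν, hνp, hνT, hνμ⟩ := hNUE
  haveI := hνp
  haveI : Nonempty X := ⟨(exists_le_integral (μ := μ) (integrable_const (0:ℝ))).choose⟩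
  -- a bounded continuous nonneg function with different lintegrals
  obtain ⟨g0, hg0⟩ : ∃ g0 : BoundedContinuousFunction X ℝ≥0,
      ∫⁻ x, g0 x ∂ν ≠ ∫⁻ x, g0 x ∂μ := by
    by_contra h
    push_neg at h
    exact hνμ (ext_of_forall_lintegral_eq_of_IsFiniteMeasure h)
  set g : C(X, ℝ) := ⟨fun x => (g0 x : ℝ), by continuity⟩ with hgdef
  have hgnonneg : ∀ x, (0:ℝ) ≤ g x := fun x => (g0 x).coe_nonneg
  have hgcont : Continuous g := g.continuous
  have hgint : ∀ (κ : Measure X) [IsProbabilityMeasure κ],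
      ∫ x, g x ∂κ = (∫⁻ x, (g0 x : ℝ≥0∞) ∂κ).toReal := by
    intro κ _
    rw [integral_eq_lintegral_of_nonneg_ae (Eventually.of_forall hgnonneg)
      hgcont.aestronglyMeasurable]
    congr 1
    exact lintegral_congr fun x => by simp [hgdef]
  have hgne : ∫ x, g x ∂ν ≠ ∫ x, g x ∂μ := by
    rw [hgint ν, hgint μ]
    intro h
    exact hg0 ((ENNReal.toReal_eq_toReal_iff'
      (BoundedContinuousFunction.lintegral_lt_top_of_nnreal ν g0).ne
      (BoundedContinuousFunction.lintegral_lt_top_of_nnreal μ g0).ne).mp h)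
  have hint_cont : ∀ (h : C(X,ℝ)) (κ : Measure X) [IsFiniteMeasure κ], Integrable (⇑h) κ :=
    fun h κ _ => h.continuous.integrable_of_hasCompactSupport
      (HasCompactSupport.of_compactSpace _)
  -- get f nonneg with ∫ f dμ < ∫ f dν
  obtain ⟨f, hf0, hlt⟩ : ∃ f : C(X,ℝ), (∀ x, 0 ≤ f x) ∧ ∫ x, f x ∂μ < ∫ x, f x ∂ν := by
    rcases hgne.lt_or_gt with h | h
    · obtain ⟨x₀, -, hx₀⟩ := isCompact_univ.exists_isMaxOn Set.univ_nonempty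
        hgcont.continuousOn
      refine ⟨ContinuousMap.const X (g x₀) - g,
        fun x => sub_nonneg.2 (hx₀ (Set.mem_univ x)), ?_⟩
      have h1 : ∀ (κ : Measure X) [IsProbabilityMeasure κ],
          ∫ x, (ContinuousMap.const X (g x₀) - g) x ∂κ = g x₀ - ∫ x, g x ∂κ := by
        intro κ _
        simp only [ContinuousMap.sub_apply, ContinuousMap.const_apply]
        rw [integral_sub (integrable_const _) (hint_cont g κ), integral_const]
        simp
      rw [h1 μ, h1 ν]
      linarith
    · exact ⟨g, hgnonneg, h⟩
  set a := ∫ x, f x ∂μ with ha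
  set c := ∫ x, f x ∂ν with hc
  set ε := (c - a)/3 with hε
  have hεpos : 0 < ε := by rw [hε]; linarith
  set F : ℕ → X → ℝ := fun k x => (k:ℝ)⁻¹ * ∑ i ∈ range k, f ((⇑T)^[i] x) with hF
  have hTit : ∀ i : ℕ, Continuous ((⇑T)^[i]) := fun i => T.continuous.iterate i
  have hFcont : ∀ k, Continuous (F k) := fun k =>
    continuous_const.mul (continuous_finset_sum _ fun i _ => f.continuous.comp (hTit i))
  have hFint : ∀ (k : ℕ) (κ : Measure X) [IsFiniteMeasure κ], Integrable (F k) κ :=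
    fun k κ _ => (hFcont k).integrable_of_hasCompactSupport
      (HasCompactSupport.of_compactSpace _)
  have hTemb : ∀ i : ℕ, MeasurableEmbedding ((⇑T)^[i]) := by
    intro i
    induction i with
    | zero => simpa using MeasurableEmbedding.id
    | succ n ih =>
        rw [Function.iterate_succ']
        exact T.toMeasurableEquiv.measurableEmbedding.comp ih
  have key : ∀ (κ : Measure X) [IsProbabilityMeasure κ], MeasurePreserving (⇑T) κ κ →
      ∀ k : ℕ, k ≠ 0 → ∫ x, F k x ∂κ = ∫ x, f x ∂κ := by
    intro κ _ hκ k hk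
    simp only [hF]
    have hik : ∀ i : ℕ, Integrable (fun x => f ((⇑T)^[i] x)) κ := fun i =>
      (f.continuous.comp (hTit i)).integrable_of_hasCompactSupport
        (HasCompactSupport.of_compactSpace _)
    rw [integral_const_mul, integral_finset_sum _ (fun i _ => hik i)]
    have : ∀ i ∈ range k, ∫ x, f ((⇑T)^[i] x) ∂κ = ∫ x, f x ∂κ := fun i _ =>
      (hκ.iterate i).integral_comp (hTemb i) f
    rw [Finset.sum_congr rfl this, Finset.sum_const, card_range, nsmul_eq_mul]
    rw [inv_mul_cancel_left₀ (Nat.cast_ne_zero.2 hk)]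
  have hFμ : ∀ k : ℕ, k ≠ 0 → ∫ x, F k x ∂μ = a := fun k hk =>
    key μ hErg.toMeasurePreserving k hk
  have hFν : ∀ k : ℕ, k ≠ 0 → ∫ x, F k x ∂ν = c := fun k hk => key ν hνT k hk
  set U : ℕ → Set X := fun k => if k = 0 then Set.univ
    else if Even k then {x | F k x < a + ε} else {x | c - ε < F k x} with hU
  have hUopen : ∀ k, IsOpen (U k) := by
    intro k
    simp only [hU]
    split_ifs
    · exact isOpen_univ
    · exact isOpen_lt (hFcont k) continuous_const
    · exact isOpen_lt continuous_const (hFcont k)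
  have hUne : ∀ k, (U k).Nonempty := by
    intro k
    simp only [hU]
    split_ifs with h1 h2
    · exact Set.univ_nonempty
    · obtain ⟨x, hx⟩ := exists_le_integral (μ := μ) (hFint k μ)
      exact ⟨x, by simp only [Set.mem_setOf_eq]; rw [hFμ k h1] at hx; linarith⟩
    · obtain ⟨x, hx⟩ := exists_integral_le (μ := ν) (hFint k ν)
      exact ⟨x, by simp only [Set.mem_setOf_eq]; rw [hFν k h1] at hx; linarith⟩
  have hUpos : ∀ k, 0 < μ (U k) := fun k => (hUopen k).measure_pos μ (hUne k)
  refine ⟨U, f, hUopen, hUne, hUpos, hf0, ?_⟩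
  have hseq : (fun k : ℕ => (μ (U k)).toReal⁻¹ *
      ∫ x in U k, (k : ℝ)⁻¹ * ∑ i ∈ range k, f ((⇑T)^[i] x) ∂μ)
      = fun k : ℕ => (μ (U k)).toReal⁻¹ * ∫ x in U k, F k x ∂μ := rfl
  rw [hseq]
  set s : ℕ → ℝ := fun k => (μ (U k)).toReal⁻¹ * ∫ x in U k, F k x ∂μ with hs
  have htr : ∀ k, 0 < (μ (U k)).toReal :=
    fun k => ENNReal.toReal_pos (hUpos k).ne' (measure_ne_top μ _)
  have hupper : ∀ k : ℕ, k ≠ 0 → Even k → s k ≤ a + ε := by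
    intro k hk0 hke
    have hUk : U k = {x | F k x < a + ε} := by rw [hU]; simp [hk0, hke]
    have hint : ∫ x in U k, F k x ∂μ ≤ (a + ε) * (μ (U k)).toReal := by
      calc ∫ x in U k, F k x ∂μ ≤ ∫ _x in U k, (a+ε) ∂μ := by
            apply setIntegral_mono_on (hFint k μ).integrableOn
              (integrableOn_const (measure_lt_top μ _).ne)
              (hUopen k).measurableSet
            intro x hx
            rw [hUk] at hx
            exact le_of_lt hx
        _ = (a+ε) * (μ (U k)).toReal := by
            rw [setIntegral_const, smul_eq_mul, mul_comm, Measure.real]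
    calc s k ≤ (μ (U k)).toReal⁻¹ * ((a + ε) * (μ (U k)).toReal) := by
          exact mul_le_mul_of_nonneg_left hint (inv_nonneg.2 (htr k).le)
      _ = a + ε := by
          rw [mul_comm (a + ε) (μ (U k)).toReal, inv_mul_cancel_left₀ (htr k).ne']
  have hlower : ∀ k : ℕ, ¬ Even k → c - ε ≤ s k := by
    intro k hke
    have hk0 : k ≠ 0 := by rintro rfl; exact hke (Even.zero)
    have hUk : U k = {x | c - ε < F k x} := by rw [hU]; simp [hk0, hke]
    have hint : (c - ε) * (μ (U k)).toReal ≤ ∫ x in U k, F k x ∂μ := by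
      calc (c - ε) * (μ (U k)).toReal = ∫ _x in U k, (c - ε) ∂μ := by
            rw [setIntegral_const, smul_eq_mul, mul_comm, Measure.real]
        _ ≤ ∫ x in U k, F k x ∂μ := by
            apply setIntegral_mono_on
              (integrableOn_const (measure_lt_top μ _).ne)
              (hFint k μ).integrableOn (hUopen k).measurableSet
            intro x hx
            rw [hUk] at hx
            exact le_of_lt hx
    calc c - ε = (μ (U k)).toReal⁻¹ * ((c - ε) * (μ (U k)).toReal) := by
          rw [mul_comm (c - ε) (μ (U k)).toReal, inv_mul_cancel_left₀ (htr k).ne']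
      _ ≤ s k := mul_le_mul_of_nonneg_left hint (inv_nonneg.2 (htr k).le)
  intro hC
  rw [Metric.cauchySeq_iff] at hC
  obtain ⟨N, hN⟩ := hC ε hεpos
  have h1 := hN (2*N+2) (by omega) (2*N+1) (by omega)
  have hu := hupper (2*N+2) (by omega) ⟨N+1, by ring⟩
  have hl := hlower (2*N+1) (by simp [Nat.even_add_one, parity_simps])
  rw [Real.dist_eq, abs_lt] at h1
  have h2 := h1.1
  have h3 : c - a = 3 * ε := by rw [hε]; ring
  linarith
end

section
/- Let X = (X, ρ) be a compact metric space, T : X → X a 1-Lipschitz homeomorphism, and μ a T-invariant ergodic Borel probability measure. Let (r_k) be a non-increasing sequence of positive reals with r_k → 0, and let B_k(x) be the open ball of radius r_k around x. Then for μ-almost every x ∈ X, (1/μ(B_k(x))) ∫_{B_k(x)} (1/k)∑_{i=0}^{k-1} f∘T^i dμ → ∫ f dμ as k → ∞ for all f ∈ C(X). -/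
open MeasureTheory Filter Finset Topology

private lemma iter_nonexpansive {X : Type*} [MetricSpace X] (T : X ≃ₜ X)
    (hLip : ∀ x y : X, dist (T x) (T y) ≤ dist x y) (i : ℕ) (y z : X) :
    dist ((⇑T)^[i] y) ((⇑T)^[i] z) ≤ dist y z := by
  induction i with
  | zero => simp
  | succ n ih =>
    simp only [Function.iterate_succ_apply']
    exact (hLip _ _).trans ih

private lemma avg_dist_le {ε : ℝ} (hε : 0 ≤ ε) (k : ℕ) (a b : ℕ → ℝ)
    (h : ∀ i ∈ range k, |a i - b i| ≤ ε) :
    |(k : ℝ)⁻¹ * ∑ i ∈ range k, a i - (k : ℝ)⁻¹ * ∑ i ∈ range k, b i| ≤ ε := by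
  rcases Nat.eq_zero_or_pos k with hk | hk
  · simpa [hk] using hε
  · have hk' : (0 : ℝ) < k := by exact_mod_cast hk
    rw [← mul_sub, ← Finset.sum_sub_distrib, abs_mul, abs_of_nonneg (inv_nonneg.2 hk'.le)]
    calc (k : ℝ)⁻¹ * |∑ i ∈ range k, (a i - b i)|
        ≤ (k : ℝ)⁻¹ * ∑ i ∈ range k, |a i - b i| := by
          gcongr
          exact Finset.abs_sum_le_sum_abs _ _
      _ ≤ (k : ℝ)⁻¹ * ∑ _i ∈ range k, ε := by
          gcongr with i hi
          exact h i hi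
      _ = ε := by
          rw [Finset.sum_const, Finset.card_range, nsmul_eq_mul]
          field_simp

private lemma ae_ball_pos {X : Type*} [MetricSpace X] [CompactSpace X] [MeasurableSpace X]
    [BorelSpace X] (μ : Measure X) [IsProbabilityMeasure μ] :
    ∀ᵐ x ∂μ, ∀ δ : ℝ, 0 < δ → 0 < μ (Metric.ball x δ) := by
  set S : Set (Set X) := {U | IsOpen U ∧ μ U = 0} with hS
  obtain ⟨C, hCc, hCS, hCu⟩ := TopologicalSpace.isOpen_sUnion_countable S (fun s hs => hs.1)
  have hU0 : μ (⋃₀ S) = 0 := by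
    rw [← hCu]
    exact (measure_sUnion_null_iff hCc).2 fun s hs => (hCS hs).2
  rw [ae_iff]
  refine measure_mono_null ?_ hU0
  intro x hx
  push_neg at hx
  obtain ⟨δ, hδ, h0⟩ := hx
  refine Set.mem_sUnion.2 ⟨Metric.ball x δ, ⟨Metric.isOpen_ball, ?_⟩, Metric.mem_ball_self hδ⟩
  exact le_antisymm h0 zero_le

private lemma eq_const_of_ae_const {X : Type*} [MetricSpace X] [MeasurableSpace X]
    [BorelSpace X] {μ : Measure X} {g : X → ℝ} (hg : Continuous g) {c : ℝ}
    (hgc : g =ᵐ[μ] fun _ => c) {x : X}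
    (hx : ∀ δ : ℝ, 0 < δ → 0 < μ (Metric.ball x δ)) : g x = c := by
  by_contra hne
  have hopen : IsOpen ((g ⁻¹' {c})ᶜ) := (isClosed_singleton.preimage hg).isOpen_compl
  have hmem : x ∈ (g ⁻¹' {c})ᶜ := by simpa using hne
  obtain ⟨δ, hδ, hball⟩ := Metric.isOpen_iff.1 hopen x hmem
  have h0 : μ ((g ⁻¹' {c})ᶜ) = 0 := by
    have := ae_iff.1 hgc
    convert this using 2
    ext y; simp
  exact absurd (measure_mono_null hball h0) (hx δ hδ).ne'

private lemma birkhoff_pt {X : Type*} [MetricSpace X] [CompactSpace X] [MeasurableSpace X]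
    [BorelSpace X] (μ : Measure X) [IsProbabilityMeasure μ]
    (T : X ≃ₜ X) (hLip : ∀ x y : X, dist (T x) (T y) ≤ dist x y)
    (hErg : Ergodic (⇑T) μ) (f : C(X, ℝ)) {x : X}
    (hx : ∀ δ : ℝ, 0 < δ → 0 < μ (Metric.ball x δ)) :
    Tendsto (fun k : ℕ => (k : ℝ)⁻¹ * ∑ i ∈ range k, f ((⇑T)^[i] x)) atTop
      (𝓝 (∫ y, f y ∂μ)) := by
  have hcont : ∀ k : ℕ, Continuous fun y : X => (k : ℝ)⁻¹ * ∑ i ∈ range k, f ((⇑T)^[i] y) :=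
    fun k => continuous_const.mul (continuous_finset_sum _ fun i _ =>
      f.continuous.comp (T.continuous.iterate i))
  set F : ℕ → BoundedContinuousFunction X ℝ := fun k =>
    BoundedContinuousFunction.mkOfCompact ⟨_, hcont k⟩ with hF
  have hFapp : ∀ (k : ℕ) (y : X),
      F k y = (k : ℝ)⁻¹ * ∑ i ∈ range k, f ((⇑T)^[i] y) := fun k y => rfl
  have hcint : ∀ h : C(X, ℝ), Integrable (⇑h) μ := fun h => by
    exact (BoundedContinuousFunction.mkOfCompact h).integrable μ
  have hbound : ∀ (g : BoundedContinuousFunction X ℝ) (y : X), g ∈ Set.range F → g y ∈ Metric.closedBall (0 : ℝ) ‖f‖ := by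
    rintro g y ⟨k, rfl⟩
    rw [Metric.mem_closedBall, dist_zero_right]
    have := avg_dist_le (norm_nonneg f) k (fun i => f ((⇑T)^[i] y)) (fun _ => 0)
      (fun i _ => by simpa using f.norm_coe_le_norm ((⇑T)^[i] y))
    rw [hFapp, Real.norm_eq_abs]
    simpa only [Finset.sum_const_zero, mul_zero, sub_zero] using this
  have hequi : Equicontinuous fun k => ⇑(F k) := by
    intro x₀
    rw [Metric.equicontinuousAt_iff]
    intro ε hε
    obtain ⟨δ, hδ, hδf⟩ := Metric.uniformContinuous_iff.1
      (CompactSpace.uniformContinuous_of_continuous f.continuous) (ε / 2) (by positivity)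
    refine ⟨δ, hδ, fun y hy k => ?_⟩
    have hle : dist (F k x₀) (F k y) ≤ ε / 2 := by
      rw [hFapp, hFapp, Real.dist_eq]
      refine avg_dist_le (by positivity) k _ _ fun i _ => ?_
      have hd : dist ((⇑T)^[i] x₀) ((⇑T)^[i] y) ≤ dist x₀ y :=
        iter_nonexpansive T hLip i x₀ y
      have hl : dist (f ((⇑T)^[i] x₀)) (f ((⇑T)^[i] y)) < ε / 2 :=
        hδf (lt_of_le_of_lt hd (by rwa [dist_comm] at hy))
      rw [Real.dist_eq] at hl
      exact hl.le
    linarith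
  have hequi' : Equicontinuous ((↑) : Set.range F → X → ℝ) := by
    have hfac : ((↑) : Set.range F → X → ℝ) = (fun k => ⇑(F k)) ∘ fun g => g.2.choose := by
      funext g
      exact congrArg _ g.2.choose_spec.symm
    rw [hfac]
    exact hequi.comp _
  have hcompact : IsCompact (closure (Set.range F)) :=
    BoundedContinuousFunction.arzela_ascoli (Metric.closedBall (0 : ℝ) ‖f‖)
      (isCompact_closedBall _ _) (Set.range F) hbound hequi'
  apply tendsto_of_subseq_tendsto
  intro ns hns
  have hmem : ∀ n, F (ns n) ∈ closure (Set.range F) := fun n => subset_closure ⟨ns n, rfl⟩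
  obtain ⟨g, hgmem, φ, hφ, hconv⟩ := hcompact.isSeqCompact hmem
  have hktop : Tendsto (fun j => ns (φ j)) atTop atTop := hns.comp hφ.tendsto_atTop
  have hpt : ∀ y : X, Tendsto (fun j => F (ns (φ j)) y) atTop (𝓝 (g y)) := fun y =>
    ((continuous_eval_const y : Continuous fun g : BoundedContinuousFunction X ℝ => g y).tendsto g).comp hconv
  -- invariance of g
  have hinv : ∀ y : X, g (T y) = g y := by
    intro y
    have hb : ∀ k : ℕ, ‖F k (T y) - F k y‖ ≤ (k : ℝ)⁻¹ * (2 * ‖f‖) := by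
      intro k
      rcases Nat.eq_zero_or_pos k with hk | hk
      · simp [hFapp, hk]
      · have hsum : ∑ i ∈ range k, f ((⇑T)^[i] (T y)) =
            (∑ i ∈ range k, f ((⇑T)^[i] y)) + f ((⇑T)^[k] y) - f y := by
          have hstep : ∀ i : ℕ, f ((⇑T)^[i] (T y)) = f ((⇑T)^[i + 1] y) := fun i => by
            rw [← Function.iterate_succ_apply]
          simp_rw [hstep]
          have h1 := Finset.sum_range_succ' (fun i => f ((⇑T)^[i] y)) k
          have h2 := Finset.sum_range_succ (fun i => f ((⇑T)^[i] y)) k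
          simp only [Function.iterate_zero, id_eq] at h1
          linarith
        rw [hFapp, hFapp, hsum]
        have heq : (k : ℝ)⁻¹ * ((∑ i ∈ range k, f ((⇑T)^[i] y)) + f ((⇑T)^[k] y) - f y) -
            (k : ℝ)⁻¹ * ∑ i ∈ range k, f ((⇑T)^[i] y)
            = (k : ℝ)⁻¹ * (f ((⇑T)^[k] y) - f y) := by ring
        rw [heq, norm_mul, norm_inv]
        gcongr
        · simp
        · calc ‖f ((⇑T)^[k] y) - f y‖ ≤ ‖f ((⇑T)^[k] y)‖ + ‖f y‖ := norm_sub_le _ _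
            _ ≤ ‖f‖ + ‖f‖ := add_le_add (f.norm_coe_le_norm _) (f.norm_coe_le_norm _)
            _ = 2 * ‖f‖ := by ring
    have hdiff : Tendsto (fun j => F (ns (φ j)) (T y) - F (ns (φ j)) y) atTop (𝓝 0) := by
      have htail : Tendsto (fun j => ((ns (φ j) : ℝ))⁻¹ * (2 * ‖f‖)) atTop (𝓝 0) := by
        have : Tendsto (fun j => ((ns (φ j) : ℝ))⁻¹) atTop (𝓝 0) :=
          tendsto_inv_atTop_zero.comp (tendsto_natCast_atTop_atTop.comp hktop)
        simpa using this.mul_const (2 * ‖f‖)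
      exact squeeze_zero_norm (fun j => hb (ns (φ j))) htail
    have := tendsto_nhds_unique ((hpt (T y)).sub (hpt y)) hdiff
    linarith [this]
  obtain ⟨c, hc⟩ := hErg.ae_eq_const_of_ae_eq_comp₀
    (g.continuous.measurable.nullMeasurable)
    (Filter.Eventually.of_forall fun y => hinv y)
  -- c = ∫ f
  have hgc_int : ∫ y, g y ∂μ = c := by
    rw [integral_congr_ae hc]
    simp
  have hit : ∀ i : ℕ, ∫ y, f ((⇑T)^[i] y) ∂μ = ∫ y, f y ∂μ := by
    intro i
    induction i with
    | zero => simp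
    | succ n ih =>
      simp_rw [Function.iterate_succ_apply]
      exact (hErg.toMeasurePreserving.integral_comp T.measurableEmbedding
        fun z => f ((⇑T)^[n] z)).trans ih
  have hFint : ∀ k : ℕ, 1 ≤ k → ∫ y, F k y ∂μ = ∫ y, f y ∂μ := by
    intro k hk
    have hik : ∀ i : ℕ, Integrable (fun y => f ((⇑T)^[i] y)) μ := fun i =>
      hcint ⟨fun y => f ((⇑T)^[i] y), f.continuous.comp (T.continuous.iterate i)⟩
    simp_rw [hFapp]
    rw [integral_const_mul, integral_finset_sum _ fun i _ => hik i]
    simp_rw [hit]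
    rw [Finset.sum_const, Finset.card_range, nsmul_eq_mul, ← mul_assoc,
      inv_mul_cancel₀ (by exact_mod_cast (Nat.pos_of_ne_zero (by omega)).ne' : (k:ℝ) ≠ 0), one_mul]
  have h1 : Tendsto (fun j => ∫ y, F (ns (φ j)) y ∂μ) atTop (𝓝 (∫ y, g y ∂μ)) := by
    rw [tendsto_iff_dist_tendsto_zero]
    have hbd : ∀ j, dist (∫ y, F (ns (φ j)) y ∂μ) (∫ y, g y ∂μ) ≤ dist (F (ns (φ j))) g := by
      intro j
      rw [Real.dist_eq, ← integral_sub ((F _).integrable μ) (g.integrable μ)]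
      calc |∫ y, (F (ns (φ j)) y - g y) ∂μ|
          ≤ (μ Set.univ).toReal * ‖F (ns (φ j)) - g‖ := by
            simpa using (F (ns (φ j)) - g).norm_integral_le_mul_norm μ
        _ = dist (F (ns (φ j))) g := by
            rw [dist_eq_norm]
            simp
    exact squeeze_zero (fun j => dist_nonneg) hbd
      (tendsto_iff_dist_tendsto_zero.1 hconv)
  have hgint : ∫ y, g y ∂μ = ∫ y, f y ∂μ := by
    have hev : ∀ᶠ j in atTop, ∫ y, F (ns (φ j)) y ∂μ = ∫ y, f y ∂μ := by
      filter_upwards [hktop.eventually_ge_atTop 1] with j hj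
      exact hFint _ hj
    have h2 : Tendsto (fun j => ∫ y, F (ns (φ j)) y ∂μ) atTop (𝓝 (∫ y, f y ∂μ)) :=
      Tendsto.congr' (Filter.EventuallyEq.symm hev) tendsto_const_nhds
    exact tendsto_nhds_unique h1 h2
  have hgx : g x = ∫ y, f y ∂μ := by
    have := eq_const_of_ae_const g.continuous hc hx
    rw [this, ← hgc_int, hgint]
  refine ⟨φ, ?_⟩
  have := hpt x
  rw [hgx] at this
  exact this

/-- Spatial-temporal differentiation along shrinking balls for a 1-Lipschitz
homeomorphism: for almost every `x`, the averages of Birkhoff means of any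
continuous `f` over the balls `B(x, r_k)` converge to `∫ f dμ`. -/
theorem nonexpansive_random_balls
    {X : Type*} [MetricSpace X] [CompactSpace X] [MeasurableSpace X] [BorelSpace X]
    (μ : Measure X) [IsProbabilityMeasure μ]
    (T : X ≃ₜ X) (hLip : ∀ x y : X, dist (T x) (T y) ≤ dist x y)
    (hErg : Ergodic (⇑T) μ)
    (r : ℕ → ℝ) (hrpos : ∀ k, 0 < r k) (hrmono : Antitone r)
    (hr0 : Tendsto r atTop (𝓝 0)) :
    ∀ᵐ x ∂μ, ∀ f : C(X, ℝ),
      Tendsto (fun k : ℕ => (μ (Metric.ball x (r k))).toReal⁻¹ *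
          ∫ y in Metric.ball x (r k), (k : ℝ)⁻¹ * ∑ i ∈ range k, f ((⇑T)^[i] y) ∂μ)
        atTop (𝓝 (∫ y, f y ∂μ)) := by
  filter_upwards [ae_ball_pos μ] with x hx
  intro f
  have hbirk := birkhoff_pt μ T hLip hErg f hx
  rw [Metric.tendsto_nhds]
  intro ε hε
  obtain ⟨δ, hδ, hδf⟩ := Metric.uniformContinuous_iff.1
    (CompactSpace.uniformContinuous_of_continuous f.continuous) (ε / 4) (by positivity)
  have h1 : ∀ᶠ k in atTop, r k < δ := hr0.eventually (gt_mem_nhds hδ)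
  have h2 : ∀ᶠ k : ℕ in atTop,
      dist ((k : ℝ)⁻¹ * ∑ i ∈ range k, f ((⇑T)^[i] x)) (∫ y, f y ∂μ) < ε / 4 := by
    have := hbirk (Metric.ball_mem_nhds _ (by positivity : (0:ℝ) < ε / 4))
    simpa [Metric.mem_ball] using this
  filter_upwards [h1, h2] with k hk1 hk2
  set B := Metric.ball x (r k) with hB
  set m := (μ B).toReal with hm
  set I := ∫ y, f y ∂μ with hI
  set A : X → ℝ := fun y => (k : ℝ)⁻¹ * ∑ i ∈ range k, f ((⇑T)^[i] y) with hA
  have hμB : μ B ≠ 0 := (hx _ (hrpos k)).ne'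
  have hμBfin : μ B ≠ ⊤ := (measure_lt_top μ B).ne
  have hmpos : 0 < m := ENNReal.toReal_pos hμB hμBfin
  have hAcont : Continuous A := continuous_const.mul (continuous_finset_sum _ fun i _ =>
    f.continuous.comp (T.continuous.iterate i))
  have hAint : Integrable A μ := by
    exact (BoundedContinuousFunction.mkOfCompact (⟨A, hAcont⟩ : C(X, ℝ))).integrable μ
  have hptb : ∀ y ∈ B, ‖A y - I‖ ≤ ε / 2 := by
    intro y hy
    have hyx : dist y x < δ := lt_trans (Metric.mem_ball.1 hy) hk1
    have hd1 : |A y - A x| ≤ ε / 4 := by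
      refine avg_dist_le (by positivity) k _ _ fun i _ => ?_
      have hd : dist ((⇑T)^[i] y) ((⇑T)^[i] x) ≤ dist y x := iter_nonexpansive T hLip i y x
      have hl := hδf (lt_of_le_of_lt hd hyx)
      rw [Real.dist_eq] at hl
      exact hl.le
    have hd2 : |A x - I| < ε / 4 := by
      rw [← Real.dist_eq]
      exact hk2
    calc ‖A y - I‖ = |A y - I| := rfl
      _ ≤ |A y - A x| + |A x - I| := abs_sub_le _ _ _
      _ ≤ ε / 4 + ε / 4 := by linarith
      _ = ε / 2 := by ring
  have hsub : ∫ y in B, (A y - I) ∂μ = (∫ y in B, A y ∂μ) - m * I := by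
    rw [integral_sub hAint.integrableOn
      (integrableOn_const (measure_lt_top μ B).ne)]
    rw [setIntegral_const, smul_eq_mul]
    rfl
  have hnorm : ‖∫ y in B, (A y - I) ∂μ‖ ≤ (ε / 2) * m := by
    exact norm_setIntegral_le_of_norm_le_const (measure_lt_top μ B) hptb
  have hrw : m⁻¹ * ∫ y in B, A y ∂μ - I = m⁻¹ * ∫ y in B, (A y - I) ∂μ := by
    rw [hsub, mul_sub, inv_mul_cancel_left₀ hmpos.ne']
  rw [Real.dist_eq, hrw, abs_mul, abs_of_nonneg (inv_nonneg.2 hmpos.le)]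
  calc m⁻¹ * |∫ y in B, (A y - I) ∂μ| ≤ m⁻¹ * ((ε / 2) * m) := by
        gcongr
        exact hnorm
    _ = ε / 2 := by
        rw [mul_comm (ε / 2) m, inv_mul_cancel_left₀ hmpos.ne']
    _ < ε := by linarith
end

section
/- Let X = (X, ρ) be a compact metric space, T : X → X a 1-Lipschitz homeomorphism, μ a T-invariant ergodic Borel probability measure, and 𝓔 = {E_d}_{d ∈ 𝒟} a finite measurable partition generating the Borel σ-algebra under T. Let C_k(x) denote the element of ⋁_{i=0}^{k-1} T^{-i}𝓔 containing x. Suppose diam(C_k(x)) → 0 for μ-almost all x. Then for μ-almost every x ∈ X, (1/μ(C_k(x))) ∫_{C_k(x)} (1/k)∑_{i=0}^{k-1} f∘T^i dμ → ∫ f dμ for all f ∈ C(X). -/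
open MeasureTheory Filter Finset Topology


section MaxS

variable {X : Type*}

/-- Partial maxima of Birkhoff sums: `maxS T g N x = max_{0 ≤ k ≤ N} S_k g x`. -/
noncomputable def maxS (T : X → X) (g : X → ℝ) : ℕ → X → ℝ
  | 0 => fun _ => 0
  | (N+1) => fun x => max (maxS T g N x) (birkhoffSum T g (N+1) x)

lemma maxS_nonneg (T : X → X) (g : X → ℝ) (N : ℕ) (x : X) : 0 ≤ maxS T g N x := by
  induction N with
  | zero => exact le_refl _
  | succ N ih => exact le_max_of_le_left ih

lemma maxS_mono_succ (T : X → X) (g : X → ℝ) (N : ℕ) (x : X) :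
    maxS T g N x ≤ maxS T g (N+1) x := le_max_left _ _

lemma birkhoffSum_le_maxS (T : X → X) (g : X → ℝ) {k N : ℕ} (h : k ≤ N) (x : X) :
    birkhoffSum T g k x ≤ maxS T g N x := by
  induction N with
  | zero =>
    obtain rfl : k = 0 := Nat.le_zero.mp h
    simp [maxS, birkhoffSum]
  | succ N ih =>
    rcases Nat.lt_succ_iff_lt_or_eq.mp (Nat.lt_succ_of_le h) with h' | rfl
    · exact (ih (Nat.lt_succ_iff.mp h')).trans (le_max_left _ _)
    · exact le_max_right _ _

lemma maxS_continuous [TopologicalSpace X] {T : X → X} {g : X → ℝ}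
    (hT : Continuous T) (hg : Continuous g) (N : ℕ) : Continuous (maxS T g N) := by
  induction N with
  | zero => exact continuous_const
  | succ N ih =>
    exact ih.max (continuous_finset_sum _ fun i _ => hg.comp (hT.iterate i))

lemma maxS_key (T : X → X) (g : X → ℝ) (N : ℕ) (x : X) (h : 0 < maxS T g N x) :
    maxS T g N x ≤ g x + maxS T g N (T x) := by
  induction N with
  | zero => simp [maxS] at h
  | succ N ih =>
    have hb : birkhoffSum T g (N+1) x ≤ g x + maxS T g (N+1) (T x) := by
      rw [birkhoffSum_succ']
      exact add_le_add le_rfl (birkhoffSum_le_maxS T g (Nat.le_succ N) (T x))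
    rcases le_or_gt (maxS T g N x) 0 with ha | ha
    · have hab : maxS T g N x ≤ birkhoffSum T g (N+1) x := by
        by_contra hcon
        push_neg at hcon
        have : maxS T g (N+1) x = maxS T g N x := max_eq_left hcon.le
        rw [this] at h
        exact absurd ha (not_le.mpr h)
      show max _ _ ≤ _
      rw [max_eq_right hab]
      exact hb
    · exact max_le ((ih ha).trans (add_le_add le_rfl (maxS_mono_succ T g N (T x))))
        hb

end MaxS

section Maximal

variable {X : Type*} [MetricSpace X] [CompactSpace X] [MeasurableSpace X] [BorelSpace X]
variable {μ : Measure X} [IsProbabilityMeasure μ]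

lemma cont_integrable {g : X → ℝ} (hg : Continuous g) : Integrable g μ :=
  hg.integrable_of_hasCompactSupport (isClosed_tsupport g).isCompact


lemma maximal_ergodic (T : X ≃ₜ X) (hT : MeasurePreserving (⇑T) μ μ) {g : X → ℝ}
    (hg : Continuous g) (N : ℕ) :
    0 ≤ ∫ x in {x | 0 < maxS (⇑T) g N x}, g x ∂μ := by
  set φ : X → ℝ := maxS (⇑T) g N with hφ
  have hφc : Continuous φ := maxS_continuous T.continuous hg N
  have hφ_int : Integrable φ μ := cont_integrable hφc
  have hg_int : Integrable g μ := cont_integrable hg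
  have hφT_int : Integrable (fun x => φ (T x)) μ := cont_integrable (hφc.comp T.continuous)
  set E : Set X := {x | 0 < φ x} with hE
  have hEm : MeasurableSet E := measurableSet_lt measurable_const hφc.measurable
  have step1 : ∫ x in E, (φ x - φ (T x)) ∂μ ≤ ∫ x in E, g x ∂μ := by
    refine setIntegral_mono_on ((hφ_int.sub hφT_int).integrableOn)
      hg_int.integrableOn hEm fun x hx => ?_
    have := maxS_key (⇑T) g N x hx
    linarith
  have step2 : ∫ x in E, (φ x - φ (T x)) ∂μ
      = (∫ x in E, φ x ∂μ) - ∫ x in E, φ (T x) ∂μ :=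
    integral_sub hφ_int.integrableOn hφT_int.integrableOn
  have step3 : ∫ x in E, φ x ∂μ = ∫ x, φ x ∂μ := by
    have h0 : ∫ x in Eᶜ, φ x ∂μ = 0 := by
      refine setIntegral_eq_zero_of_forall_eq_zero fun x hx => ?_
      have h1 : ¬ 0 < φ x := hx
      exact le_antisymm (not_lt.mp h1) (maxS_nonneg (⇑T) g N x)
    rw [← integral_add_compl hEm hφ_int, h0, add_zero]
  have step4 : ∫ x in E, φ (T x) ∂μ ≤ ∫ x, φ (T x) ∂μ :=
    setIntegral_le_integral hφT_int
      (Eventually.of_forall fun x => maxS_nonneg (⇑T) g N (T x))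
  have step5 : ∫ x, φ (T x) ∂μ = ∫ x, φ x ∂μ :=
    hT.integral_comp T.measurableEmbedding φ
  linarith

end Maximal
section OneSided

lemma maxS_mono {X : Type*} (T : X → X) (g : X → ℝ) {k N : ℕ} (h : k ≤ N) (x : X) :
    maxS T g k x ≤ maxS T g N x := by
  induction N with
  | zero => obtain rfl : k = 0 := Nat.le_zero.mp h; exact le_refl _
  | succ N ih =>
    rcases Nat.lt_succ_iff_lt_or_eq.mp (Nat.lt_succ_of_le h) with h' | rfl
    · exact (ih (Nat.lt_succ_iff.mp h')).trans (maxS_mono_succ T g N x)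
    · exact le_refl _

lemma freq_shift {u v : ℕ → ℝ} {c : ℝ} (hv : Filter.Tendsto v atTop (𝓝 0))
    (h : ∀ m : ℕ, ∃ᶠ n in atTop, c - 1/(m+1) < u n) :
    ∀ m : ℕ, ∃ᶠ n in atTop, c - 1/(m+1) < u n + v n := by
  intro m
  have hpos : (0:ℝ) < 1/(2*(m:ℝ)+2) := by positivity
  have hev : ∀ᶠ n in atTop, ‖v n‖ < 1/(2*(m:ℝ)+2) :=
    (NormedAddCommGroup.tendsto_nhds_zero.mp hv) _ hpos
  refine ((h (2*m+1)).and_eventually hev).mono fun n hn => ?_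
  obtain ⟨h1, h2⟩ := hn
  have e1 : ((2*m+1 : ℕ) : ℝ) + 1 = 2*(m:ℝ)+2 := by push_cast; ring
  rw [e1] at h1
  have h4 : -(1/(2*(m:ℝ)+2)) < v n := neg_lt_of_abs_lt h2
  have e2 : 1/(2*(m:ℝ)+2) + 1/(2*(m:ℝ)+2) = 1/((m:ℝ)+1) := by
    rw [← add_div, div_eq_div_iff (by positivity) (by positivity)]
    ring
  nlinarith [h1, h4]

variable {X : Type*} [MetricSpace X] [CompactSpace X] [MeasurableSpace X] [BorelSpace X]
variable {μ : Measure X} [IsProbabilityMeasure μ]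

lemma birkhoffAverage_continuous {T : X → X} (hT : Continuous T) {g : X → ℝ}
    (hg : Continuous g) (n : ℕ) :
    Continuous (fun x => birkhoffAverage ℝ T g n x) := by
  unfold birkhoffAverage birkhoffSum
  exact (continuous_finset_sum _ fun i _ => hg.comp (hT.iterate i)).const_smul ((n:ℝ)⁻¹)

lemma birkhoffAverage_shift_tendsto (T : X ≃ₜ X) {g : X → ℝ} (hg : Continuous g) (x : X) :
    Filter.Tendsto (fun n => birkhoffAverage ℝ (⇑T) g n (T x) - birkhoffAverage ℝ (⇑T) g n x)
      atTop (𝓝 0) := by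
  obtain ⟨M, hM⟩ : ∃ M, ∀ y ∈ (Set.univ : Set X), ‖g y‖ ≤ M :=
    isCompact_univ.exists_bound_of_continuousOn hg.continuousOn
  have key : ∀ n : ℕ, birkhoffAverage ℝ (⇑T) g n (T x) - birkhoffAverage ℝ (⇑T) g n x
      = (n:ℝ)⁻¹ • (g ((⇑T)^[n] x) - g x) := fun n =>
    birkhoffAverage_apply_sub_birkhoffAverage (R := ℝ) (⇑T) g n x
  have hbound : ∀ n : ℕ, ‖birkhoffAverage ℝ (⇑T) g n (T x) - birkhoffAverage ℝ (⇑T) g n x‖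
      ≤ (2*M)/(n:ℝ) := by
    intro n
    rw [key n]
    rcases Nat.eq_zero_or_pos n with rfl | hn
    · simp only [Nat.cast_zero, inv_zero, zero_smul, norm_zero, div_zero]
      exact le_refl 0
    · rw [norm_smul, norm_inv, Real.norm_natCast, div_eq_inv_mul]
      refine mul_le_mul_of_nonneg_left ?_ (by positivity)
      calc ‖g ((⇑T)^[n] x) - g x‖ ≤ ‖g ((⇑T)^[n] x)‖ + ‖g x‖ := norm_sub_le _ _
        _ ≤ M + M := add_le_add (hM _ (Set.mem_univ _)) (hM _ (Set.mem_univ _))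
        _ = 2*M := by ring
  exact squeeze_zero_norm hbound (tendsto_const_div_atTop_nhds_zero_nat (2*M))

lemma oneSided (T : X ≃ₜ X) (hErg : Ergodic (⇑T) μ) {g : X → ℝ} (hg : Continuous g)
    {c : ℝ} (hc : ∫ x, g x ∂μ < c) :
    ∀ᵐ x ∂μ, ∀ᶠ n in atTop, birkhoffAverage ℝ (⇑T) g n x ≤ c := by
  set b : ℕ → X → ℝ := fun n x => birkhoffAverage ℝ (⇑T) g n x with hb
  set A : Set X := ⋂ m : ℕ, ⋂ N : ℕ, ⋃ n : ℕ, ⋃ _ : N ≤ n, {x | c - 1/((m:ℝ)+1) < b n x}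
    with hA
  have hAmem : ∀ x, x ∈ A ↔ ∀ m : ℕ, ∃ᶠ n in atTop, c - 1/((m:ℝ)+1) < b n x := by
    intro x
    simp only [hA, Set.mem_iInter, Set.mem_iUnion, Set.mem_setOf_eq, frequently_atTop]
    constructor
    · intro h m N; obtain ⟨n, hn, h2⟩ := h m N; exact ⟨n, hn, h2⟩
    · intro h m N; obtain ⟨n, hn, h2⟩ := h m N; exact ⟨n, hn, h2⟩
  have hbC : ∀ n, Continuous (b n) := fun n => birkhoffAverage_continuous T.continuous hg n
  have hAM : MeasurableSet A :=
    MeasurableSet.iInter fun m => MeasurableSet.iInter fun N =>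
      MeasurableSet.iUnion fun n => MeasurableSet.iUnion fun _ =>
      measurableSet_lt measurable_const (hbC n).measurable
  have hinv : (⇑T) ⁻¹' A = A := by
    ext x
    simp only [Set.mem_preimage, hAmem]
    constructor
    · intro h m
      have hv := (birkhoffAverage_shift_tendsto T hg x).neg
      rw [neg_zero] at hv
      have := freq_shift hv h m
      refine this.mono fun n hn => ?_
      simp only [hb] at hn ⊢; linarith
    · intro h m
      have hv := birkhoffAverage_shift_tendsto T hg x
      have := freq_shift hv h m
      refine this.mono fun n hn => ?_
      simp only [hb] at hn ⊢; linarith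
  rcases hErg.toPreErgodic.measure_self_or_compl_eq_zero hAM hinv with h0 | h1
  · have hae : ∀ᵐ x ∂μ, x ∉ A := by
      rw [ae_iff]; simpa using h0
    refine hae.mono fun x hx => ?_
    rw [hAmem] at hx
    simp only [not_forall] at hx
    obtain ⟨m, hm⟩ := hx
    rw [Filter.not_frequently] at hm
    refine hm.mono fun n hn => ?_
    have h2 : ¬ (c - 1/((m:ℝ)+1) < b n x) := hn
    push_neg at h2
    have h3 : (0:ℝ) < 1/((m:ℝ)+1) := by positivity
    linarith
  · exfalso
    obtain ⟨m₀, hm₀⟩ := exists_nat_one_div_lt (sub_pos.mpr hc)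
    set c' := c - 1/((m₀:ℝ)+1) with hc'
    set g' : X → ℝ := fun x => g x - c' with hg'
    have hg'c : Continuous g' := hg.sub continuous_const
    have hg'int : Integrable g' μ := cont_integrable hg'c
    have hneg : ∫ x, g' x ∂μ < 0 := by
      rw [hg']
      rw [integral_sub (cont_integrable hg) (integrable_const c'), integral_const]
      simp only [measureReal_def, measure_univ, ENNReal.toReal_one, one_smul]
      rw [hc']
      linarith
    set U : ℕ → Set X := fun N => {x | 0 < maxS (⇑T) g' N x} with hU
    have hUm : ∀ N, MeasurableSet (U N) :=
      fun N => measurableSet_lt measurable_const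
        (maxS_continuous T.continuous hg'c N).measurable
    have hUmono : Monotone U := fun N N' hNN' x hx =>
      lt_of_lt_of_le hx (maxS_mono (⇑T) g' hNN' x)
    have hsub : A ⊆ ⋃ N, U N := by
      intro x hx
      rw [hAmem] at hx
      obtain ⟨n, hn1, hn2⟩ := frequently_atTop.mp (hx m₀) 1
      refine Set.mem_iUnion.mpr ⟨n, ?_⟩
      show 0 < maxS (⇑T) g' n x
      have hS : birkhoffSum (⇑T) g' n x = birkhoffSum (⇑T) g n x - n * c' := by
        simp [birkhoffSum, hg', Finset.sum_sub_distrib]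
      have hnpos : (0:ℝ) < (n:ℝ) := by exact_mod_cast hn1
      have hbn : b n x = (n:ℝ)⁻¹ * birkhoffSum (⇑T) g n x := by
        simp [hb, birkhoffAverage, smul_eq_mul]
      have hlt : (n:ℝ) * c' < birkhoffSum (⇑T) g n x := by
        have h5 : c' < (n:ℝ)⁻¹ * birkhoffSum (⇑T) g n x := by
          rw [← hbn]; exact hn2
        calc (n:ℝ) * c' < (n:ℝ) * ((n:ℝ)⁻¹ * birkhoffSum (⇑T) g n x) :=
              mul_lt_mul_of_pos_left h5 hnpos
          _ = birkhoffSum (⇑T) g n x := by field_simp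
      have hpos : 0 < birkhoffSum (⇑T) g' n x := by rw [hS]; linarith
      exact lt_of_lt_of_le hpos (birkhoffSum_le_maxS (⇑T) g' (le_refl n) x)
    have hA1 : μ A = 1 := by
      rwa [← prob_compl_eq_zero_iff hAM]
    have hmeasU : μ (⋃ N, U N) = 1 :=
      le_antisymm prob_le_one (hA1 ▸ measure_mono hsub)
    have htend := tendsto_setIntegral_of_monotone hUm hUmono hg'int.integrableOn
    have hcompl : μ (⋃ N, U N)ᶜ = 0 := by
      rw [measure_compl (MeasurableSet.iUnion hUm) (measure_ne_top μ _), hmeasU]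
      simp
    have hUeq : ∫ x in ⋃ N, U N, g' x ∂μ = ∫ x, g' x ∂μ := by
      rw [← integral_add_compl (MeasurableSet.iUnion hUm) hg'int]
      have : ∫ x in (⋃ N, U N)ᶜ, g' x ∂μ = 0 := by
        rw [Measure.restrict_eq_zero.mpr hcompl]
        simp
      rw [this, add_zero]
    have hge : 0 ≤ ∫ x in ⋃ N, U N, g' x ∂μ :=
      ge_of_tendsto htend (Filter.Eventually.of_forall fun N =>
        maximal_ergodic T hErg.toMeasurePreserving hg'c N)
    rw [hUeq] at hge
    linarith

end OneSided
section Birkhoff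

variable {X : Type*} [MetricSpace X] [CompactSpace X] [MeasurableSpace X] [BorelSpace X]
variable {μ : Measure X} [IsProbabilityMeasure μ]

omit [CompactSpace X] [MeasurableSpace X] [BorelSpace X] in
lemma abs_birkhoffAverage_le (T : X → X) (h : X → ℝ) {c : ℝ} (hc : 0 ≤ c)
    (hh : ∀ y, |h y| ≤ c) (n : ℕ) (x : X) : |birkhoffAverage ℝ T h n x| ≤ c := by
  rcases Nat.eq_zero_or_pos n with rfl | hn
  · simpa [birkhoffAverage] using hc
  · have h1 : |birkhoffSum T h n x| ≤ n * c := by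
      calc |∑ i ∈ Finset.range n, h (T^[i] x)|
          ≤ ∑ i ∈ Finset.range n, |h (T^[i] x)| := Finset.abs_sum_le_sum_abs _ _
        _ ≤ ∑ _i ∈ Finset.range n, c := Finset.sum_le_sum fun i _ => hh _
        _ = n * c := by simp [Finset.sum_const, Finset.card_range, nsmul_eq_mul]
    have hnpos : (0:ℝ) < (n:ℝ) := by exact_mod_cast hn
    rw [birkhoffAverage, smul_eq_mul, abs_mul, abs_inv, Nat.abs_cast]
    rw [inv_mul_le_iff₀ hnpos]
    linarith [h1]

lemma birkhoff_cont (T : X ≃ₜ X) (hErg : Ergodic (⇑T) μ) {f : X → ℝ} (hf : Continuous f) :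
    ∀ᵐ x ∂μ, Filter.Tendsto (fun n => birkhoffAverage ℝ (⇑T) f n x) atTop
      (𝓝 (∫ x, f x ∂μ)) := by
  have hneg : ∀ n x, birkhoffAverage ℝ (⇑T) (fun y => -f y) n x
      = - birkhoffAverage ℝ (⇑T) f n x := by
    intro n x
    simp [birkhoffAverage, birkhoffSum, Finset.sum_neg_distrib]
  have hup : ∀ j : ℕ, ∀ᵐ x ∂μ, ∀ᶠ n in atTop,
      birkhoffAverage ℝ (⇑T) f n x ≤ ∫ x, f x ∂μ + 1/((j:ℝ)+1) :=
    fun j => oneSided T hErg hf (lt_add_of_pos_right _ (by positivity))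
  have hdw : ∀ j : ℕ, ∀ᵐ x ∂μ, ∀ᶠ n in atTop,
      ∫ x, f x ∂μ - 1/((j:ℝ)+1) ≤ birkhoffAverage ℝ (⇑T) f n x := by
    intro j
    have h2 : ∫ x, (fun y => -f y) x ∂μ < - ∫ x, f x ∂μ + 1/((j:ℝ)+1) := by
      rw [integral_neg]
      exact lt_add_of_pos_right _ (by positivity)
    refine (oneSided T hErg hf.neg h2).mono fun x hx => hx.mono fun n hn => ?_
    rw [show (-f) = (fun y => -f y) from rfl, hneg] at hn
    linarith
  have := (ae_all_iff.mpr hup).and (ae_all_iff.mpr hdw)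
  refine this.mono fun x hx => ?_
  obtain ⟨h1, h2⟩ := hx
  rw [Metric.tendsto_atTop]
  intro ε hε
  obtain ⟨j, hj⟩ := exists_nat_one_div_lt hε
  obtain ⟨N1, hN1⟩ := eventually_atTop.mp (h1 j)
  obtain ⟨N2, hN2⟩ := eventually_atTop.mp (h2 j)
  refine ⟨max N1 N2, fun n hn => ?_⟩
  have e1 := hN1 n (le_trans (le_max_left _ _) hn)
  have e2 := hN2 n (le_trans (le_max_right _ _) hn)
  rw [Real.dist_eq, abs_sub_lt_iff]
  constructor <;> [skip; skip] <;> linarith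

lemma birkhoff_all (T : X ≃ₜ X) (hErg : Ergodic (⇑T) μ) :
    ∀ᵐ x ∂μ, ∀ f : C(X, ℝ), Filter.Tendsto (fun n => birkhoffAverage ℝ (⇑T) (⇑f) n x) atTop
      (𝓝 (∫ x, f x ∂μ)) := by
  obtain ⟨u, hu⟩ := TopologicalSpace.exists_dense_seq C(X, ℝ)
  have hae := ae_all_iff.mpr fun i : ℕ => birkhoff_cont T hErg (u i).continuous
  refine hae.mono fun x hx f => ?_
  rw [Metric.tendsto_atTop]
  intro ε hε
  obtain ⟨i, hi⟩ : ∃ i, dist f (u i) < ε/4 := by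
    obtain ⟨i, hi⟩ := hu.exists_dist_lt f (show (0:ℝ) < ε/4 by linarith)
    exact ⟨i, hi⟩
  have hptw : ∀ y, |f y - u i y| ≤ ε/4 := fun y => by
    have := ContinuousMap.dist_apply_le_dist (f := f) (g := u i) y
    rw [Real.dist_eq] at this
    linarith
  have hdiff : ∀ n, |birkhoffAverage ℝ (⇑T) (⇑f) n x
      - birkhoffAverage ℝ (⇑T) (⇑(u i)) n x| ≤ ε/4 := by
    intro n
    have heq : birkhoffAverage ℝ (⇑T) (⇑f) n x - birkhoffAverage ℝ (⇑T) (⇑(u i)) n x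
        = birkhoffAverage ℝ (⇑T) (fun y => f y - u i y) n x := by
      simp only [birkhoffAverage, birkhoffSum, smul_eq_mul, Finset.sum_sub_distrib]
      ring
    rw [heq]
    exact abs_birkhoffAverage_le (⇑T) _ (by linarith) hptw n x
  have hint : |(∫ y, f y ∂μ) - ∫ y, u i y ∂μ| ≤ ε/4 := by
    have heq : (∫ y, f y ∂μ) - ∫ y, u i y ∂μ = ∫ y, (f y - u i y) ∂μ :=
      (integral_sub (cont_integrable f.continuous)
        (cont_integrable (u i).continuous)).symm
    rw [heq, ← Real.norm_eq_abs]
    calc ‖∫ y, (f y - u i y) ∂μ‖ ≤ ε/4 * (μ Set.univ).toReal := by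
          refine norm_integral_le_of_norm_le_const (Filter.Eventually.of_forall fun y => ?_)
          simpa [Real.norm_eq_abs] using hptw y
      _ = ε/4 := by simp
  obtain ⟨N, hN⟩ := Metric.tendsto_atTop.mp (hx i) (ε/4) (by linarith)
  refine ⟨N, fun n hn => ?_⟩
  have h1 := hdiff n
  have h2 := hN n hn
  rw [Real.dist_eq] at h2 ⊢
  have := abs_sub_lt_iff.mp h2
  rw [abs_sub_lt_iff]
  have ha := abs_sub_le_iff.mp h1
  have hb := abs_sub_le_iff.mp hint
  constructor <;> linarith [ha.1, ha.2, hb.1, hb.2, this.1, this.2]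

end Birkhoff
/-- Spatial-temporal differentiation along random cylinders for a 1-Lipschitz
homeomorphism: if the cylinders of a finite generating partition have diameters
tending to `0` almost everywhere, then for almost every `x` the averages of
Birkhoff means of any continuous `f` over `C_k(x)` converge to `∫ f dμ`. -/
theorem nonexpansive_random_cylinders
    {X D : Type*} [MetricSpace X] [CompactSpace X] [MeasurableSpace X] [BorelSpace X]
    [Fintype D]
    (μ : Measure X) [IsProbabilityMeasure μ]
    (T : X ≃ₜ X) (hLip : ∀ x y : X, dist (T x) (T y) ≤ dist x y)
    (hErg : Ergodic (⇑T) μ)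
    (E : D → Set X) (hEm : ∀ d, MeasurableSet (E d))
    (hEdisj : Pairwise (Function.onFun Disjoint E))
    (hEcov : (⋃ d, E d) = Set.univ)
    (hgen : MeasurableSpace.generateFrom
        {s : Set X | ∃ (n : ℤ) (d : D), s = (T.toEquiv ^ n) '' E d} = ‹MeasurableSpace X›)
    (C : X → ℕ → Set X)
    (hC : ∀ x k, C x k =
      {y : X | ∀ i < k, ∀ d : D, (⇑T)^[i] x ∈ E d ↔ (⇑T)^[i] y ∈ E d})
    (hdiam : ∀ᵐ x ∂μ, Tendsto (fun k => Metric.diam (C x k)) atTop (𝓝 0)) :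
    ∀ᵐ x ∂μ, ∀ f : C(X, ℝ),
      Tendsto (fun k : ℕ => (μ (C x k)).toReal⁻¹ *
          ∫ y in C x k, (k : ℝ)⁻¹ * ∑ i ∈ range k, f ((⇑T)^[i] y) ∂μ)
        atTop (𝓝 (∫ y, f y ∂μ)) := by
  classical
  have hTmeas : Measurable (⇑T) := T.continuous.measurable
  -- measurability of cylinders
  have hCm : ∀ x k, MeasurableSet (C x k) := by
    intro x k
    rw [hC]
    have heq : {y : X | ∀ i < k, ∀ d : D, (⇑T)^[i] x ∈ E d ↔ (⇑T)^[i] y ∈ E d}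
        = ⋂ i ∈ Finset.range k, ⋂ d : D,
            {y : X | (⇑T)^[i] x ∈ E d ↔ (⇑T)^[i] y ∈ E d} := by
      ext y
      simp only [Set.mem_setOf_eq, Set.mem_iInter, Finset.mem_range]
    rw [heq]
    refine Finset.measurableSet_biInter _ fun i _ => MeasurableSet.iInter fun d => ?_
    by_cases h : (⇑T)^[i] x ∈ E d
    · have : {y : X | (⇑T)^[i] x ∈ E d ↔ (⇑T)^[i] y ∈ E d} = (⇑T)^[i] ⁻¹' (E d) := by
        ext y; simp [h]
      rw [this]
      exact (hTmeas.iterate i) (hEm d)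
    · have : {y : X | (⇑T)^[i] x ∈ E d ↔ (⇑T)^[i] y ∈ E d} = ((⇑T)^[i] ⁻¹' (E d))ᶜ := by
        ext y; simp [h]
      rw [this]
      exact ((hTmeas.iterate i) (hEm d)).compl
  have hxmem : ∀ x k, x ∈ C x k := by
    intro x k
    rw [hC]
    exact fun i _ d => Iff.rfl
  -- itinerary map
  have hcov' : ∀ z : X, ∃ d, z ∈ E d := fun z => Set.mem_iUnion.mp (hEcov ▸ Set.mem_univ z)
  choose dOf hdOf using hcov'
  have hCeq : ∀ x k, C x k = {y : X | ∀ i < k, (⇑T)^[i] y ∈ E (dOf ((⇑T)^[i] x))} := by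
    intro x k
    rw [hC]
    ext y
    simp only [Set.mem_setOf_eq]
    constructor
    · intro h i hi
      exact (h i hi (dOf ((⇑T)^[i] x))).mp (hdOf _)
    · intro h i hi d
      constructor
      · intro hxd
        have hd : d = dOf ((⇑T)^[i] x) := by
          by_contra hne
          exact Set.disjoint_left.mp (hEdisj hne) hxd (hdOf _)
        rw [hd]; exact h i hi
      · intro hyd
        have hd : d = dOf ((⇑T)^[i] x) := by
          by_contra hne
          exact Set.disjoint_left.mp (hEdisj hne) hyd (h i hi)
        rw [hd]; exact hdOf _
  -- almost everywhere, all cylinders have positive measure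
  have hpos : ∀ᵐ x ∂μ, ∀ k, 0 < μ (C x k) := by
    rw [ae_all_iff]
    intro k
    set Z : (Fin k → D) → Set X := fun v => {y : X | ∀ i : Fin k, (⇑T)^[(i:ℕ)] y ∈ E (v i)}
      with hZ
    have hCZ : ∀ x, C x k = Z (fun i => dOf ((⇑T)^[(i:ℕ)] x)) := by
      intro x
      rw [hCeq x k]
      ext y
      simp only [Set.mem_setOf_eq, hZ]
      constructor
      · intro h i; exact h i i.isLt
      · intro h i hi; exact h ⟨i, hi⟩
    set W : (Fin k → D) → Set X := fun v => if μ (Z v) = 0 then Z v else ∅ with hW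
    have hWnull : μ (⋃ v, W v) = 0 := by
      refine measure_iUnion_null fun v => ?_
      simp only [hW]
      split_ifs with h
      · exact h
      · simp
    refine measure_mono_null ?_ hWnull
    intro x hx
    have hx0 : μ (C x k) = 0 := by simpa [not_lt, nonpos_iff_eq_zero] using hx
    have hz0 : μ (Z (fun i => dOf ((⇑T)^[(i:ℕ)] x))) = 0 := by rw [← hCZ x]; exact hx0
    refine Set.mem_iUnion.mpr ⟨fun i => dOf ((⇑T)^[(i:ℕ)] x), ?_⟩
    have hWZ : W (fun i => dOf ((⇑T)^[(i:ℕ)] x)) = Z (fun i => dOf ((⇑T)^[(i:ℕ)] x)) := by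
      simp only [hW]
      rw [if_pos hz0]
    rw [hWZ, ← hCZ x]
    exact hxmem x k
  -- Birkhoff
  have hBirk := birkhoff_all T hErg
  refine ((hdiam.and hpos).and hBirk).mono fun x hx => ?_
  obtain ⟨⟨hdx, hpx⟩, hbx⟩ := hx
  intro f
  set b : ℕ → X → ℝ := fun n y => birkhoffAverage ℝ (⇑T) (⇑f) n y with hbdef
  have hexpr : ∀ k : ℕ, (∫ y in C x k, (k : ℝ)⁻¹ * ∑ i ∈ range k, f ((⇑T)^[i] y) ∂μ)
      = ∫ y in C x k, b k y ∂μ := by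
    intro k
    refine integral_congr_ae (Filter.Eventually.of_forall fun y => ?_)
    simp [hbdef, birkhoffAverage, birkhoffSum, smul_eq_mul]
  have hdiffsmall : Tendsto
      (fun k => (μ (C x k)).toReal⁻¹ * (∫ y in C x k, b k y ∂μ) - b k x) atTop (𝓝 0) := by
    rw [NormedAddCommGroup.tendsto_nhds_zero]
    intro ε hε
    obtain ⟨δ, hδpos, hδ⟩ := Metric.uniformContinuous_iff.mp
      (CompactSpace.uniformContinuous_of_continuous f.continuous) (ε/2) (by linarith)
    have hev : ∀ᶠ k in atTop, Metric.diam (C x k) < δ := hdx.eventually_lt_const hδpos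
    filter_upwards [hev] with k hk
    have hCkm := hCm x k
    have hμpos := hpx k
    have htR : 0 < (μ (C x k)).toReal := ENNReal.toReal_pos hμpos.ne' (measure_ne_top μ _)
    have hptw : ∀ y ∈ C x k, ‖b k y - b k x‖ ≤ ε/2 := by
      intro y hy
      have hit : ∀ i : ℕ, dist ((⇑T)^[i] y) ((⇑T)^[i] x) ≤ dist y x := by
        intro i
        induction i with
        | zero => simp
        | succ i ih =>
          rw [Function.iterate_succ_apply', Function.iterate_succ_apply']
          exact (hLip _ _).trans ih
      have hdyx : dist y x ≤ Metric.diam (C x k) :=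
        Metric.dist_le_diam_of_mem (isCompact_univ.isBounded.subset (Set.subset_univ _))
          hy (hxmem x k)
      have hfi : ∀ i : ℕ, |f ((⇑T)^[i] y) - f ((⇑T)^[i] x)| ≤ ε/2 := by
        intro i
        have h1 : dist ((⇑T)^[i] y) ((⇑T)^[i] x) < δ :=
          lt_of_le_of_lt ((hit i).trans hdyx) hk
        have := hδ h1
        rw [Real.dist_eq] at this
        linarith
      rcases Nat.eq_zero_or_pos k with rfl | hkpos
      · simp only [hbdef, birkhoffAverage_zero, sub_self, norm_zero]
        linarith
      · have heq2 : b k y - b k x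
            = (k:ℝ)⁻¹ * (∑ i ∈ range k, (f ((⇑T)^[i] y) - f ((⇑T)^[i] x))) := by
          simp only [hbdef, birkhoffAverage, birkhoffSum, smul_eq_mul,
            Finset.sum_sub_distrib]
          ring
        have hkpos' : (0:ℝ) < (k:ℝ) := by exact_mod_cast hkpos
        rw [Real.norm_eq_abs, heq2, abs_mul, abs_inv, Nat.abs_cast]
        rw [inv_mul_le_iff₀ hkpos']
        have hsum : |∑ i ∈ range k, (f ((⇑T)^[i] y) - f ((⇑T)^[i] x))| ≤ (k:ℝ) * (ε/2) :=
          calc |∑ i ∈ range k, (f ((⇑T)^[i] y) - f ((⇑T)^[i] x))|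
              ≤ ∑ i ∈ range k, |f ((⇑T)^[i] y) - f ((⇑T)^[i] x)| :=
                Finset.abs_sum_le_sum_abs _ _
            _ ≤ ∑ _i ∈ range k, (ε/2) := Finset.sum_le_sum fun i _ => hfi i
            _ = (k:ℝ) * (ε/2) := by
                simp [Finset.sum_const, Finset.card_range, nsmul_eq_mul]
        linarith
    have hbint : IntegrableOn (b k) (C x k) μ :=
      (cont_integrable (birkhoffAverage_continuous T.continuous f.continuous k)).integrableOn
    have hconst : IntegrableOn (fun _ => b k x) (C x k) μ := (integrable_const _).integrableOn
    have hIeq : (∫ y in C x k, b k y ∂μ) - (μ (C x k)).toReal * b k x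
        = ∫ y in C x k, (b k y - b k x) ∂μ := by
      rw [integral_sub hbint hconst, setIntegral_const, smul_eq_mul, measureReal_def]
    have hnorm : ‖∫ y in C x k, (b k y - b k x) ∂μ‖ ≤ (ε/2) * (μ (C x k)).toReal :=
      norm_setIntegral_le_of_norm_le_const (measure_lt_top μ _) hptw
    have hsplit : (μ (C x k)).toReal⁻¹ * (∫ y in C x k, b k y ∂μ) - b k x
        = (μ (C x k)).toReal⁻¹
            * ((∫ y in C x k, b k y ∂μ) - (μ (C x k)).toReal * b k x) := by
      field_simp
    rw [hsplit, hIeq, norm_mul, norm_inv, Real.norm_eq_abs, abs_of_pos htR]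
    calc (μ (C x k)).toReal⁻¹ * ‖∫ y in C x k, (b k y - b k x) ∂μ‖
        ≤ (μ (C x k)).toReal⁻¹ * ((ε/2) * (μ (C x k)).toReal) := by
          exact mul_le_mul_of_nonneg_left hnorm (by positivity)
      _ = ε/2 := by field_simp
      _ < ε := by linarith
  have hcomb : Tendsto (fun k => (μ (C x k)).toReal⁻¹ * ∫ y in C x k, b k y ∂μ)
      atTop (𝓝 (∫ y, f y ∂μ)) := by
    have h2 : Tendsto (fun k => b k x) atTop (𝓝 (∫ y, f y ∂μ)) := hbx f
    have h3 := hdiffsmall.add h2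
    rw [zero_add] at h3
    refine h3.congr fun k => ?_
    ring
  refine hcomb.congr fun k => ?_
  rw [hexpr k]
end

section
/- Let X = 𝒟^ℤ be a Bernoulli shift on a finite alphabet with strictly positive probability vector, left shift T, μ the product measure, and f = χ_{[0]}. Then there exists x ∈ X such that the sequence ((1/μ(C_k(x))) ∫_{C_k(x)} (1/k)∑_{i=0}^{k-1} f∘T^i dμ)_{k≥1} is not Cauchy; specifically its liminf is ≤ 1/3 and its limsup is ≥ 2/3. -/
open MeasureTheory Filter Finset Topology



def cntz (k : ℕ) : ℕ := ((Finset.range k).filter (fun i => Nat.log2 (i+2) % 2 = 0)).card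

lemma cntz_le (k : ℕ) : cntz k ≤ k := by
  simpa [cntz] using (Finset.card_filter_le (Finset.range k) _)

lemma two_le_pow (k : ℕ) : 2 ≤ 2^(k+1) := by
  have := Nat.one_lt_two_pow (n := k+1) (by omega); omega

lemma log2_band {k i : ℕ} (h1 : 2^(k+1) - 2 ≤ i) (h2 : i < 2^(k+2) - 2) :
    Nat.log2 (i + 2) = k + 1 := by
  have h2' := two_le_pow k
  have hdouble : 2^(k+2) = 2 * 2^(k+1) := by ring
  rw [Nat.log2_eq_log_two]
  exact Nat.log_eq_of_pow_le_of_lt_pow (by omega) (by omega)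

lemma cntz_step (k : ℕ) :
    cntz (2^(k+2) - 2) = cntz (2^(k+1) - 2) + (if (k+1) % 2 = 0 then 2^(k+1) else 0) := by
  have h2' := two_le_pow k
  have hdouble : 2^(k+2) = 2 * 2^(k+1) := by ring
  have hle : 2^(k+1) - 2 ≤ 2^(k+2) - 2 := by omega
  have hsplit : Finset.range (2^(k+2) - 2) =
      Finset.range (2^(k+1) - 2) ∪ Finset.Ico (2^(k+1) - 2) (2^(k+2) - 2) := by
    rw [Finset.range_eq_Ico, Finset.range_eq_Ico, Finset.Ico_union_Ico_eq_Ico (Nat.zero_le _) hle]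
  have hdisj : Disjoint (Finset.range (2^(k+1) - 2)) (Finset.Ico (2^(k+1) - 2) (2^(k+2) - 2)) := by
    rw [Finset.range_eq_Ico]
    exact Finset.Ico_disjoint_Ico_consecutive _ _ _
  have hcard : (Finset.Ico (2^(k+1) - 2) (2^(k+2) - 2)).card = 2^(k+1) := by
    rw [Nat.card_Ico]; omega
  unfold cntz
  rw [hsplit, Finset.filter_union, Finset.card_union_of_disjoint
    (hdisj.mono (Finset.filter_subset _ _) (Finset.filter_subset _ _))]
  congr 1
  by_cases hpar : (k+1) % 2 = 0
  · rw [if_pos hpar, Finset.filter_true_of_mem, hcard]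
    intro i hi
    rw [Finset.mem_Ico] at hi
    rw [log2_band hi.1 hi.2]; exact hpar
  · rw [if_neg hpar, Finset.card_eq_zero.mpr]
    rw [Finset.filter_eq_empty_iff]
    intro i hi
    rw [Finset.mem_Ico] at hi
    rw [log2_band hi.1 hi.2]; exact hpar

lemma cntz_two : cntz 2 = 0 := by
  have h0 : Nat.log2 (0 + 2) = 1 := log2_band (k := 0) (by norm_num) (by norm_num)
  have h1 : Nat.log2 (1 + 2) = 1 := log2_band (k := 0) (by norm_num) (by norm_num)
  unfold cntz
  rw [Finset.card_eq_zero.mpr]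
  rw [Finset.filter_eq_empty_iff]
  intro i hi
  rw [Finset.mem_range] at hi
  interval_cases i <;> simp [h0, h1]

lemma cntz_formula : ∀ k, 1 ≤ k →
    3 * cntz (2^(k+1) - 2) = 2^(k+1) - 4 + (if k % 2 = 0 then 2^(k+1) else 0) := by
  intro k hk
  induction k with
  | zero => omega
  | succ k ih =>
    rcases Nat.eq_or_lt_of_le hk with h1 | h1
    · have : k = 0 := by omega
      subst this
      simpa using cntz_two
    · have hk1 : 1 ≤ k := by omega
      have ihh := ih hk1
      have hstep := cntz_step k
      have h2 : 2 ≤ 2^(k+1) := two_le_pow k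
      have h4 : 4 ≤ 2^(k+1) := by
        have : 2^2 ≤ 2^(k+1) := Nat.pow_le_pow_right (by norm_num) (by omega)
        omega
      have hdouble : 2^(k+2) = 2 * 2^(k+1) := by ring
      have hgoal : (k+1)+1 = k+2 := rfl
      rw [hgoal, hstep]
      rcases Nat.even_or_odd k with he | ho
      · have hk0 : k % 2 = 0 := Nat.even_iff.mp he
        rw [if_pos hk0] at ihh
        rw [if_neg (by omega), if_neg (by omega)]
        omega
      · have hk0 : k % 2 = 1 := Nat.odd_iff.mp ho
        rw [if_neg (by omega)] at ihh
        rw [if_pos (by omega), if_pos (by omega)]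
        omega

lemma cntz_odd (j : ℕ) : 3 * cntz (2^(2*j+1+1) - 2) + 2 = 2^(2*j+1+1) - 2 := by
  have hf := cntz_formula (2*j+1) (by omega)
  rw [if_neg (by omega)] at hf
  have h4 : 4 ≤ 2^(2*j+1+1) := by
    have : 2^2 ≤ 2^(2*j+1+1) := Nat.pow_le_pow_right (by norm_num) (by omega)
    omega
  omega

lemma cntz_even (j : ℕ) : 3 * cntz (2^(2*j+2+1) - 2) = 2 * (2^(2*j+2+1) - 2) := by
  have hf := cntz_formula (2*j+2) (by omega)
  rw [if_pos (by omega)] at hf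
  have h4 : 4 ≤ 2^(2*j+2+1) := by
    have : 2^2 ≤ 2^(2*j+2+1) := Nat.pow_le_pow_right (by norm_num) (by omega)
    omega
  omega

lemma cntz_ratio_odd (j : ℕ) :
    (cntz (2^(2*j+1+1) - 2) : ℝ) / ((2^(2*j+1+1) - 2 : ℕ) : ℝ) ≤ 1/3 := by
  have h := cntz_odd j
  have h2 : (2:ℕ) ≤ 2^(2*j+1+1) - 2 := by
    have := two_le_pow (2*j+2); omega
  have hL : (0:ℝ) < ((2^(2*j+1+1) - 2 : ℕ) : ℝ) := by
    exact_mod_cast (by omega : 0 < 2^(2*j+1+1) - 2)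
  rw [div_le_iff₀ hL]
  have hcast : 3 * (cntz (2^(2*j+1+1) - 2) : ℝ) + 2 = ((2^(2*j+1+1) - 2 : ℕ) : ℝ) := by
    exact_mod_cast h
  linarith

lemma cntz_ratio_even (j : ℕ) :
    (2:ℝ)/3 ≤ (cntz (2^(2*j+2+1) - 2) : ℝ) / ((2^(2*j+2+1) - 2 : ℕ) : ℝ) := by
  have h := cntz_even j
  have h2 : (2:ℕ) ≤ 2^(2*j+2+1) - 2 := by
    have := two_le_pow (2*j+2+1); have := two_le_pow (2*j+2); 
    have : 4 ≤ 2^(2*j+2+1) := by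
      have : 2^2 ≤ 2^(2*j+2+1) := Nat.pow_le_pow_right (by norm_num) (by omega)
      omega
    omega
  have hL : (0:ℝ) < ((2^(2*j+2+1) - 2 : ℕ) : ℝ) := by
    exact_mod_cast (by omega : 0 < 2^(2*j+2+1) - 2)
  rw [le_div_iff₀ hL]
  have hcast : 3 * (cntz (2^(2*j+2+1) - 2) : ℝ) = 2 * ((2^(2*j+2+1) - 2 : ℕ) : ℝ) := by
    exact_mod_cast h
  linarith

/-- In a full Bernoulli shift with strictly positive probability vector, there
is a point `x` whose spatial-temporal differentiation sequence for
`f = χ_{[0]}` is not Cauchy: its liminf is `≤ 1/3` and its limsup is `≥ 2/3`. -/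
theorem bernoulli_pathological_point
    (n : ℕ) (hn : 2 ≤ n)
    (p : Fin n → ENNReal) (hp : ∀ d, 0 < p d) (hp1 : ∑ d, p d = 1)
    (μ : Measure (ℤ → Fin n)) [IsProbabilityMeasure μ]
    (hμ : ∀ (m : ℤ) (ℓ : ℕ) (a : Fin ℓ → Fin n),
      μ {x : ℤ → Fin n | ∀ j : Fin ℓ, x (m + (j : ℤ)) = a j} = ∏ j, p (a j))
    (S : (ℤ → Fin n) → (ℤ → Fin n)) (hS : ∀ y m, S y m = y (m + 1)) :
    ∃ x : ℤ → Fin n,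
      ¬ CauchySeq (fun k : ℕ =>
          (μ {y : ℤ → Fin n | ∀ i : ℕ, i < k → y (i : ℤ) = x (i : ℤ)}).toReal⁻¹ *
            ∫ y in {y : ℤ → Fin n | ∀ i : ℕ, i < k → y (i : ℤ) = x (i : ℤ)},
              (k : ℝ)⁻¹ * ∑ i ∈ range k,
                Set.indicator {z : ℤ → Fin n | z 0 = (⟨0, by omega⟩ : Fin n)}
                  (fun _ => (1 : ℝ)) (S^[i] y) ∂μ) ∧
      liminf (fun k : ℕ =>
          (μ {y : ℤ → Fin n | ∀ i : ℕ, i < k → y (i : ℤ) = x (i : ℤ)}).toReal⁻¹ *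
            ∫ y in {y : ℤ → Fin n | ∀ i : ℕ, i < k → y (i : ℤ) = x (i : ℤ)},
              (k : ℝ)⁻¹ * ∑ i ∈ range k,
                Set.indicator {z : ℤ → Fin n | z 0 = (⟨0, by omega⟩ : Fin n)}
                  (fun _ => (1 : ℝ)) (S^[i] y) ∂μ) atTop ≤ 1 / 3 ∧
      2 / 3 ≤ limsup (fun k : ℕ =>
          (μ {y : ℤ → Fin n | ∀ i : ℕ, i < k → y (i : ℤ) = x (i : ℤ)}).toReal⁻¹ *
            ∫ y in {y : ℤ → Fin n | ∀ i : ℕ, i < k → y (i : ℤ) = x (i : ℤ)},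
              (k : ℝ)⁻¹ * ∑ i ∈ range k,
                Set.indicator {z : ℤ → Fin n | z 0 = (⟨0, by omega⟩ : Fin n)}
                  (fun _ => (1 : ℝ)) (S^[i] y) ∂μ) atTop := by
  set x : ℤ → Fin n := fun m =>
    if Nat.log2 (m.toNat + 2) % 2 = 0 then (⟨0, by omega⟩ : Fin n) else ⟨1, by omega⟩ with hxdef
  -- iterates of the shift
  have hiter : ∀ (y : ℤ → Fin n) (i : ℕ) (m : ℤ), S^[i] y m = y (m + i) := by
    intro y i
    induction i with
    | zero => intro m; simp
    | succ i ih =>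
      intro m
      rw [Function.iterate_succ_apply', hS]
      rw [ih (m + 1)]
      congr 1
      push_cast
      ring
  -- measurability of cylinders
  have hmeas : ∀ k : ℕ,
      MeasurableSet {y : ℤ → Fin n | ∀ i : ℕ, i < k → y (i : ℤ) = x (i : ℤ)} := by
    intro k
    have hEq : {y : ℤ → Fin n | ∀ i : ℕ, i < k → y (i : ℤ) = x (i : ℤ)} =
        ⋂ i ∈ Set.Iio k, (fun y : ℤ → Fin n => y (i : ℤ)) ⁻¹' {x (i : ℤ)} := by
      ext y; simp [Set.mem_iInter]
    rw [hEq]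
    exact MeasurableSet.biInter (Set.to_countable _)
      (fun i _ => (measurable_pi_apply (i : ℤ)) (measurableSet_singleton _))
  -- measure of cylinders
  have hμC : ∀ k : ℕ,
      μ {y : ℤ → Fin n | ∀ i : ℕ, i < k → y (i : ℤ) = x (i : ℤ)} =
        ∏ j : Fin k, p (x (j : ℤ)) := by
    intro k
    have h := hμ 0 k (fun j => x (j : ℤ))
    rw [← h]
    congr 1
    ext y
    simp only [Set.mem_setOf_eq, zero_add]
    constructor
    · intro h2 j; exact h2 j j.isLt
    · intro h2 i hi; exact h2 ⟨i, hi⟩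
  have hμpos : ∀ k : ℕ,
      (μ {y : ℤ → Fin n | ∀ i : ℕ, i < k → y (i : ℤ) = x (i : ℤ)}).toReal ≠ 0 := by
    intro k
    have hne : μ {y : ℤ → Fin n | ∀ i : ℕ, i < k → y (i : ℤ) = x (i : ℤ)} ≠ 0 := by
      rw [hμC k]
      exact Finset.prod_ne_zero_iff.mpr (fun j _ => (hp _).ne')
    exact ENNReal.toReal_ne_zero.mpr ⟨hne, measure_ne_top μ _⟩
  -- the x-coordinates
  have hx0 : ∀ i : ℕ, (x (i : ℤ) = (⟨0, by omega⟩ : Fin n)) ↔ Nat.log2 (i + 2) % 2 = 0 := by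
    intro i
    rw [hxdef]
    simp only [Int.toNat_natCast]
    by_cases h : Nat.log2 (i + 2) % 2 = 0
    · simp [h]
    · rw [if_neg h]
      constructor
      · intro hcontra
        exact absurd (congrArg Fin.val hcontra) (by simp)
      · intro hc; exact absurd hc h
  -- the key computation
  have key : ∀ k : ℕ, 1 ≤ k →
      (μ {y : ℤ → Fin n | ∀ i : ℕ, i < k → y (i : ℤ) = x (i : ℤ)}).toReal⁻¹ *
        ∫ y in {y : ℤ → Fin n | ∀ i : ℕ, i < k → y (i : ℤ) = x (i : ℤ)},
          (k : ℝ)⁻¹ * ∑ i ∈ range k,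
            Set.indicator {z : ℤ → Fin n | z 0 = (⟨0, by omega⟩ : Fin n)}
              (fun _ => (1 : ℝ)) (S^[i] y) ∂μ = (cntz k : ℝ) / (k : ℝ) := by
    intro k hk
    have hconst : Set.EqOn
        (fun y : ℤ → Fin n => (k : ℝ)⁻¹ * ∑ i ∈ range k,
            Set.indicator {z : ℤ → Fin n | z 0 = (⟨0, by omega⟩ : Fin n)}
              (fun _ => (1 : ℝ)) (S^[i] y))
        (fun _ => (k : ℝ)⁻¹ * (cntz k : ℝ))
        {y : ℤ → Fin n | ∀ i : ℕ, i < k → y (i : ℤ) = x (i : ℤ)} := by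
      intro y hy
      simp only []
      congr 1
      have hterm : ∀ i ∈ range k,
          Set.indicator {z : ℤ → Fin n | z 0 = (⟨0, by omega⟩ : Fin n)}
            (fun _ => (1 : ℝ)) (S^[i] y) =
          if Nat.log2 (i + 2) % 2 = 0 then (1 : ℝ) else 0 := by
        intro i hi
        rw [Finset.mem_range] at hi
        rw [Set.indicator_apply]
        have h1 : S^[i] y 0 = y (i : ℤ) := by rw [hiter]; norm_num
        have h2 : y (i : ℤ) = x (i : ℤ) := hy i hi
        have : (S^[i] y ∈ {z : ℤ → Fin n | z 0 = (⟨0, by omega⟩ : Fin n)}) ↔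
            Nat.log2 (i + 2) % 2 = 0 := by
          rw [Set.mem_setOf_eq, h1, h2, hx0 i]
        by_cases hc : Nat.log2 (i + 2) % 2 = 0
        · rw [if_pos (this.mpr hc), if_pos hc]
        · rw [if_neg (fun hm => hc (this.mp hm)), if_neg hc]
      rw [Finset.sum_congr rfl hterm, Finset.sum_boole]
      rfl
    rw [setIntegral_congr_fun (hmeas k) hconst, setIntegral_const, smul_eq_mul, measureReal_def,
      ← mul_assoc, inv_mul_cancel₀ (hμpos k), one_mul, inv_mul_eq_div]
  -- bounds
  have hbd : ∀ k : ℕ, 1 ≤ k → 0 ≤ (cntz k : ℝ) / (k : ℝ) ∧ (cntz k : ℝ) / (k : ℝ) ≤ 1 := by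
    intro k hk
    have hk0 : (0:ℝ) < (k : ℝ) := by exact_mod_cast hk
    constructor
    · positivity
    · rw [div_le_one hk0]
      exact_mod_cast cntz_le k
  -- growth of the subsequences
  have hgrow : ∀ c : ℕ, 1 ≤ c → Tendsto (fun j : ℕ => 2^(2*j+c+1) - 2) atTop atTop := by
    intro c hc
    refine tendsto_atTop_mono (fun j => ?_) tendsto_id
    have h1 : j < 2^j := Nat.lt_two_pow_self (n := j)
    have h2 : 2^(j+2) ≤ 2^(2*j+c+1) := Nat.pow_le_pow_right (by norm_num) (by omega)
    have h3 : 2^(j+2) = 4 * 2^j := by ring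
    simp only [id_eq]
    omega
  have hone : ∀ c j : ℕ, 1 ≤ c → 1 ≤ 2^(2*j+c+1) - 2 := by
    intro c j hc
    have : 2^2 ≤ 2^(2*j+c+1) := Nat.pow_le_pow_right (by norm_num) (by omega)
    omega
  have hfreq1 : ∃ᶠ k : ℕ in atTop, 1 ≤ k ∧ (cntz k : ℝ)/(k:ℝ) ≤ 1/3 :=
    (hgrow 1 le_rfl).frequently (Filter.Frequently.of_forall fun j => ⟨hone 1 j le_rfl, cntz_ratio_odd j⟩)
  have hfreq2 : ∃ᶠ k : ℕ in atTop, 1 ≤ k ∧ (2:ℝ)/3 ≤ (cntz k : ℝ)/(k:ℝ) :=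
    (hgrow 2 one_le_two).frequently (Filter.Frequently.of_forall fun j => ⟨hone 2 j one_le_two, cntz_ratio_even j⟩)
  have h1 : liminf (fun k : ℕ =>
      (μ {y : ℤ → Fin n | ∀ i : ℕ, i < k → y (i : ℤ) = x (i : ℤ)}).toReal⁻¹ *
        ∫ y in {y : ℤ → Fin n | ∀ i : ℕ, i < k → y (i : ℤ) = x (i : ℤ)},
          (k : ℝ)⁻¹ * ∑ i ∈ range k,
            Set.indicator {z : ℤ → Fin n | z 0 = (⟨0, by omega⟩ : Fin n)}
              (fun _ => (1 : ℝ)) (S^[i] y) ∂μ) atTop ≤ 1 / 3 := by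
    refine liminf_le_of_frequently_le ?_ ?_
    · refine hfreq1.mono (fun k hk => ?_)
      simp only [key k hk.1]
      exact hk.2
    · refine isBoundedUnder_of_eventually_ge (a := (0:ℝ)) ?_
      filter_upwards [eventually_ge_atTop 1] with k hk
      simp only [key k hk]
      exact (hbd k hk).1
  have h2 : 2 / 3 ≤ limsup (fun k : ℕ =>
      (μ {y : ℤ → Fin n | ∀ i : ℕ, i < k → y (i : ℤ) = x (i : ℤ)}).toReal⁻¹ *
        ∫ y in {y : ℤ → Fin n | ∀ i : ℕ, i < k → y (i : ℤ) = x (i : ℤ)},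
          (k : ℝ)⁻¹ * ∑ i ∈ range k,
            Set.indicator {z : ℤ → Fin n | z 0 = (⟨0, by omega⟩ : Fin n)}
              (fun _ => (1 : ℝ)) (S^[i] y) ∂μ) atTop := by
    refine le_limsup_of_frequently_le ?_ ?_
    · refine hfreq2.mono (fun k hk => ?_)
      simp only [key k hk.1]
      exact hk.2
    · refine isBoundedUnder_of_eventually_le (a := (1:ℝ)) ?_
      filter_upwards [eventually_ge_atTop 1] with k hk
      simp only [key k hk]
      exact (hbd k hk).2
  refine ⟨x, ?_, h1, h2⟩
  intro hC
  obtain ⟨L, hL⟩ := cauchySeq_tendsto_of_complete hC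
  rw [hL.liminf_eq] at h1
  rw [hL.limsup_eq] at h2
  linarith
end

section
/- Let (X, 𝓑, μ, T) be an ergodic subshift with X ⊆ 𝒟^ℤ, and let x ∈ X such that μ(C_k(x)) > 0 for all k. Then the following are equivalent: (2) for every word a = (a_0,…,a_{ℓ−1}), lim_k (1/k)∑_{i=0}^{k-1} (1/μ(C_k(x))) ∫_{C_k(x)} χ_{[a]}∘T^i dμ = μ([a]); (3) for every word a, lim_k #{i ∈ [0, k−ℓ] : x_{i+j} = a_j for 0 ≤ j ≤ ℓ−1}/k = μ([a]). -/
open MeasureTheory Filter Finset Topology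

/-- Equivalence (2) ⟺ (3) of the theorem on normal points of a subshift:
convergence of the spatial-temporal averages of all cylinder indicators to the
measures of the cylinders is equivalent to all words having the correct
asymptotic frequencies in `x`. -/
theorem subshift_normal_point_iff
    {D : Type*} [Fintype D] [DecidableEq D] [TopologicalSpace D] [DiscreteTopology D]
    [MeasurableSpace D] [MeasurableSingletonClass D]
    (X : Set (ℤ → D)) (hXc : IsCompact X)
    (T : X → X) (hT : ∀ (x : X) (n : ℤ), (T x : ℤ → D) n = (x : ℤ → D) (n + 1))
    (hTsurj : Function.Surjective T)
    (μ : Measure X) [IsProbabilityMeasure μ] (hErg : Ergodic T μ)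
    (C : X → ℕ → Set X)
    (hC : ∀ x k, C x k =
      {y : X | ∀ i : ℕ, i < k → (y : ℤ → D) (i : ℤ) = (x : ℤ → D) (i : ℤ)})
    (x : X) (hx : ∀ k, 0 < μ (C x k)) :
    (∀ (ℓ : ℕ), 0 < ℓ → ∀ a : Fin ℓ → D,
      Tendsto (fun k : ℕ => (k : ℝ)⁻¹ * ∑ i ∈ range k,
          (μ (C x k)).toReal⁻¹ *
            ∫ y in C x k,
              Set.indicator {z : X | ∀ j : Fin ℓ, (z : ℤ → D) (j : ℤ) = a j}
                (fun _ => (1 : ℝ)) (T^[i] y) ∂μ)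
        atTop (𝓝 ((μ {z : X | ∀ j : Fin ℓ, (z : ℤ → D) (j : ℤ) = a j}).toReal))) ↔
    (∀ (ℓ : ℕ), 0 < ℓ → ∀ a : Fin ℓ → D,
      Tendsto (fun k : ℕ =>
          ((((range (k + 1)).filter (fun i : ℕ => i + ℓ ≤ k ∧
              ∀ j : Fin ℓ, (x : ℤ → D) ((i : ℤ) + (j : ℤ)) = a j)).card : ℝ) / k))
        atTop (𝓝 ((μ {z : X | ∀ j : Fin ℓ, (z : ℤ → D) (j : ℤ) = a j}).toReal))) := by
  classical
  -- iterate formula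
  have hiter : ∀ (i : ℕ) (y : X) (n : ℤ), (T^[i] y : ℤ → D) n = (y : ℤ → D) (n + i) := by
    intro i
    induction i with
    | zero => intro y n; simp
    | succ i ih =>
      intro y n
      rw [Function.iterate_succ_apply, ih, hT]
      push_cast; ring_nf
  -- measurability of T
  have hmeasT : Measurable T := by
    have : Measurable fun y : X => ((T y : ℤ → D)) := by
      rw [measurable_pi_iff]
      intro n
      simp only [hT]
      exact (measurable_pi_apply (n + 1)).comp measurable_subtype_coe
    exact Measurable.subtype_mk this
  have hmeasTi : ∀ i : ℕ, Measurable (T^[i]) := fun i => hmeasT.iterate i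
  -- measurability of cylinders
  have hmeasC : ∀ k, MeasurableSet (C x k) := by
    intro k
    rw [hC]
    have : {y : X | ∀ i : ℕ, i < k → (y : ℤ → D) (i : ℤ) = (x : ℤ → D) (i : ℤ)} =
        ⋂ i : ℕ, ⋂ _ : i < k,
          (fun y : X => (y : ℤ → D) (i : ℤ)) ⁻¹' {(x : ℤ → D) (i : ℤ)} := by
      ext y; simp [Set.mem_iInter]
    rw [this]
    exact MeasurableSet.iInter fun i => MeasurableSet.iInter fun _ =>
      ((measurable_pi_apply (i : ℤ)).comp measurable_subtype_coe) (measurableSet_singleton _)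
  -- the per-word equivalence
  have key : ∀ (ℓ : ℕ), 0 < ℓ → ∀ a : Fin ℓ → D,
      (Tendsto (fun k : ℕ => (k : ℝ)⁻¹ * ∑ i ∈ range k,
          (μ (C x k)).toReal⁻¹ *
            ∫ y in C x k,
              Set.indicator {z : X | ∀ j : Fin ℓ, (z : ℤ → D) (j : ℤ) = a j}
                (fun _ => (1 : ℝ)) (T^[i] y) ∂μ)
        atTop (𝓝 ((μ {z : X | ∀ j : Fin ℓ, (z : ℤ → D) (j : ℤ) = a j}).toReal))) ↔
      (Tendsto (fun k : ℕ =>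
          ((((range (k + 1)).filter (fun i : ℕ => i + ℓ ≤ k ∧
              ∀ j : Fin ℓ, (x : ℤ → D) ((i : ℤ) + (j : ℤ)) = a j)).card : ℝ) / k))
        atTop (𝓝 ((μ {z : X | ∀ j : Fin ℓ, (z : ℤ → D) (j : ℤ) = a j}).toReal))) := by
    intro ℓ hℓ a
    set S : Set X := {z : X | ∀ j : Fin ℓ, (z : ℤ → D) (j : ℤ) = a j} with hS
    have hmeasS : MeasurableSet S := by
      have : S = ⋂ j : Fin ℓ, (fun z : X => (z : ℤ → D) (j : ℤ)) ⁻¹' {a j} := by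
        ext z; simp [hS, Set.mem_iInter]
      rw [this]
      exact MeasurableSet.iInter fun j =>
        ((measurable_pi_apply (j : ℤ)).comp measurable_subtype_coe) (measurableSet_singleton _)
    set f : ℕ → ℝ := fun k => (k : ℝ)⁻¹ * ∑ i ∈ range k,
        (μ (C x k)).toReal⁻¹ *
          ∫ y in C x k, Set.indicator S (fun _ => (1 : ℝ)) (T^[i] y) ∂μ with hf
    set g : ℕ → ℝ := fun k =>
        ((((range (k + 1)).filter (fun i : ℕ => i + ℓ ≤ k ∧
            ∀ j : Fin ℓ, (x : ℤ → D) ((i : ℤ) + (j : ℤ)) = a j)).card : ℝ) / k) with hg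
    -- compute the integral term
    have hterm : ∀ (k i : ℕ),
        (μ (C x k)).toReal⁻¹ * ∫ y in C x k, Set.indicator S (fun _ => (1 : ℝ)) (T^[i] y) ∂μ
          = (μ (C x k)).toReal⁻¹ * (μ (C x k ∩ T^[i] ⁻¹' S)).toReal := by
      intro k i
      congr 1
      have h1 : (fun y : X => Set.indicator S (fun _ => (1 : ℝ)) (T^[i] y)) =
          Set.indicator (T^[i] ⁻¹' S) (fun _ => (1 : ℝ)) := by
        funext y
        simp [Set.indicator_apply, Set.mem_preimage]
      rw [h1, setIntegral_indicator ((hmeasTi i) hmeasS), setIntegral_const, smul_eq_mul, mul_one, Measure.real]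
    have hCfin : ∀ k, μ (C x k) ≠ ⊤ := fun k => measure_ne_top μ _
    have hCtoReal : ∀ k, 0 < (μ (C x k)).toReal := fun k =>
      ENNReal.toReal_pos (hx k).ne' (hCfin k)
    -- value of term when i + ℓ ≤ k
    have hval : ∀ (k i : ℕ), i + ℓ ≤ k →
        (μ (C x k)).toReal⁻¹ * (μ (C x k ∩ T^[i] ⁻¹' S)).toReal
          = (if (∀ j : Fin ℓ, (x : ℤ → D) ((i : ℤ) + (j : ℤ)) = a j) then (1:ℝ) else 0) := by
      intro k i hik
      by_cases hm : ∀ j : Fin ℓ, (x : ℤ → D) ((i : ℤ) + (j : ℤ)) = a j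
      · rw [if_pos hm]
        have hsub : C x k ⊆ T^[i] ⁻¹' S := by
          intro y hy
          simp only [Set.mem_preimage, hS, Set.mem_setOf_eq]
          intro j
          rw [hiter i y (j : ℤ)]
          have hij : ((i : ℕ) + (j : ℕ) : ℕ) < k := by omega
          have := (hC x k ▸ hy) (i + (j : ℕ)) hij
          rw [show ((j : ℤ) + (i : ℤ)) = (((i : ℕ) + (j : ℕ) : ℕ) : ℤ) by push_cast; ring]
          rw [this]
          rw [show (((i : ℕ) + (j : ℕ) : ℕ) : ℤ) = ((i : ℤ) + (j : ℤ)) by push_cast; ring]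
          exact hm j
        rw [Set.inter_eq_left.mpr hsub, inv_mul_cancel₀ (hCtoReal k).ne']
      · rw [if_neg hm]
        push_neg at hm
        obtain ⟨j, hj⟩ := hm
        have hempty : C x k ∩ T^[i] ⁻¹' S = ∅ := by
          ext y
          simp only [Set.mem_inter_iff, Set.mem_preimage, Set.mem_empty_iff_false, iff_false]
          rintro ⟨hy, hyS⟩
          apply hj
          have := hyS j
          rw [hiter i y (j : ℤ)] at this
          have hij : ((i : ℕ) + (j : ℕ) : ℕ) < k := by omega
          have h2 := (hC x k ▸ hy) (i + (j : ℕ)) hij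
          rw [show ((i : ℤ) + (j : ℤ)) = (((i : ℕ) + (j : ℕ) : ℕ) : ℤ) by push_cast; ring]
          rw [← h2]
          rw [show (((i : ℕ) + (j : ℕ) : ℕ) : ℤ) = ((j : ℤ) + (i : ℤ)) by push_cast; ring]
          exact this
        rw [hempty, measure_empty, ENNReal.toReal_zero, mul_zero]
    -- bounds on term
    have hterm_nonneg : ∀ (k i : ℕ),
        0 ≤ (μ (C x k)).toReal⁻¹ * (μ (C x k ∩ T^[i] ⁻¹' S)).toReal := fun k i =>
      mul_nonneg (inv_nonneg.mpr ENNReal.toReal_nonneg) ENNReal.toReal_nonneg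
    have hterm_le_one : ∀ (k i : ℕ),
        (μ (C x k)).toReal⁻¹ * (μ (C x k ∩ T^[i] ⁻¹' S)).toReal ≤ 1 := by
      intro k i
      rw [← div_eq_inv_mul, div_le_one (hCtoReal k)]
      exact ENNReal.toReal_mono (hCfin k) (measure_mono Set.inter_subset_left)
    -- the difference bound
    have hdiff : ∀ k : ℕ, |f k - g k| ≤ (ℓ : ℝ) * (k : ℝ)⁻¹ := by
      intro k
      rcases Nat.eq_zero_or_pos k with rfl | hk
      · simp [hf, hg]
      have hkR : (0:ℝ) < k := by exact_mod_cast hk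
      -- rewrite g as a sum over range k
      have hgsum : g k = (k : ℝ)⁻¹ * ∑ i ∈ range k,
          (if (i + ℓ ≤ k ∧ ∀ j : Fin ℓ, (x : ℤ → D) ((i : ℤ) + (j : ℤ)) = a j)
            then (1:ℝ) else 0) := by
        have hcard : ((range (k + 1)).filter (fun i : ℕ => i + ℓ ≤ k ∧
            ∀ j : Fin ℓ, (x : ℤ → D) ((i : ℤ) + (j : ℤ)) = a j)).card
            = ((range k).filter (fun i : ℕ => i + ℓ ≤ k ∧
            ∀ j : Fin ℓ, (x : ℤ → D) ((i : ℤ) + (j : ℤ)) = a j)).card := by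
          rw [Finset.range_add_one, Finset.filter_insert, if_neg (fun h => by omega)]
        rw [hg]
        simp only [hcard]
        rw [Finset.card_filter]
        push_cast
        rw [div_eq_inv_mul]
      rw [hgsum, hf]
      simp only [hterm]
      rw [← mul_sub, ← Finset.sum_sub_distrib, abs_mul, abs_inv, Nat.abs_cast,
        mul_comm ((ℓ:ℝ)) _]
      rw [inv_mul_le_iff₀ hkR,
        show (k:ℝ) * ((k:ℝ)⁻¹ * (ℓ:ℝ)) = (ℓ:ℝ) by
          rw [← mul_assoc, mul_inv_cancel₀ hkR.ne', one_mul]]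
      calc |∑ i ∈ range k, ((μ (C x k)).toReal⁻¹ * (μ (C x k ∩ T^[i] ⁻¹' S)).toReal -
              (if (i + ℓ ≤ k ∧ ∀ j : Fin ℓ, (x : ℤ → D) ((i : ℤ) + (j : ℤ)) = a j)
                then (1:ℝ) else 0))|
          ≤ ∑ i ∈ range k, |((μ (C x k)).toReal⁻¹ * (μ (C x k ∩ T^[i] ⁻¹' S)).toReal -
              (if (i + ℓ ≤ k ∧ ∀ j : Fin ℓ, (x : ℤ → D) ((i : ℤ) + (j : ℤ)) = a j)
                then (1:ℝ) else 0))| := Finset.abs_sum_le_sum_abs _ _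
        _ ≤ ∑ i ∈ range k, (if k < i + ℓ then (1:ℝ) else 0) := by
            apply Finset.sum_le_sum
            intro i _
            by_cases hik : i + ℓ ≤ k
            · rw [hval k i hik,
                if_congr (and_iff_right hik) rfl rfl, sub_self, abs_zero]
              split <;> norm_num
            · rw [if_neg (fun h => hik h.1), if_pos (by omega), sub_zero,
                abs_of_nonneg (hterm_nonneg k i)]
              exact hterm_le_one k i
        _ ≤ (ℓ : ℝ) := by
            rw [Finset.sum_boole]
            have hsub : (range k).filter (fun i => k < i + ℓ) ⊆ Finset.Ico (k - ℓ) k := by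
              intro i hi
              simp only [mem_filter, mem_range] at hi
              simp only [Finset.mem_Ico]
              omega
            calc (((range k).filter (fun i => k < i + ℓ)).card : ℝ)
                ≤ ((Finset.Ico (k - ℓ) k).card : ℝ) := by
                  exact_mod_cast Finset.card_le_card hsub
              _ ≤ (ℓ : ℝ) := by
                  rw [Nat.card_Ico]
                  exact_mod_cast Nat.sub_le_iff_le_add.mpr (by omega)
    -- f - g tends to 0
    have hfg0 : Tendsto (fun k => f k - g k) atTop (𝓝 0) := by
      apply squeeze_zero_norm (fun k => hdiff k)
      have h0 : Tendsto (fun k : ℕ => ((k : ℝ))⁻¹) atTop (𝓝 0) :=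
        tendsto_inv_atTop_zero.comp (tendsto_natCast_atTop_atTop (R := ℝ))
      simpa using (h0.const_mul (ℓ : ℝ))
    constructor
    · intro h
      have h2 := h.sub hfg0
      rw [show (fun k => f k - (f k - g k)) = g from funext fun k => by ring] at h2
      simpa using h2
    · intro h
      have h2 := h.add hfg0
      rw [show (fun k => g k + (f k - g k)) = f from funext fun k => by ring] at h2
      simpa using h2
  exact ⟨fun h ℓ hℓ a => (key ℓ hℓ a).mp (h ℓ hℓ a),
    fun h ℓ hℓ a => (key ℓ hℓ a).mpr (h ℓ hℓ a)⟩
end
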